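/- arXiv:1812.00951 — 3 statements merged into one kernel-verified Lean document; each statement's English description precedes it below -/
import Mathlib

section
/- Let X and Y be real Banach spaces, f : X → Y a locally Lipschitz map, and y ∈ Y. Let F_y(x) := ‖f(x) − y‖ and G_y(x) := (1/2)‖f(x) − y‖². If G_y satisfies the weighted Chang–Palais–Smale condition with respect to some weight h, then F_y satisfies the weighted Chang–Palais–Smale condition with respect to the same weight h. -/
open Filter Topology Metric Set MeasureTheory

noncomputable section

variable {X Y : Type*} [NormedAddCommGroup X] [NormedSpace ℝ X]
  [NormedAddCommGroup Y] [NormedSpace ℝ Y]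

/-- The upper right-hand Dini derivative of `φ` at `x` in the direction `v`. -/
def diniPlus (φ : X → ℝ) (x v : X) : ℝ :=
  Filter.limsup (fun t : ℝ => (φ (x + t • v) - φ x) / t) (𝓝[>] (0 : ℝ))

/-- `J` is a pseudo-Jacobian of `f` at `x`. -/
def IsPseudoJacobianAt (f : X → Y) (x : X) (J : Set (X →L[ℝ] Y)) : Prop :=
  J.Nonempty ∧ ∀ (y' : StrongDual ℝ Y) (v : X),
    diniPlus (fun z => y' (f z)) x v ≤ sSup ((fun T : X →L[ℝ] Y => y' (T v)) '' J)

/-- The Clarke generalized directional derivative of `φ` at `x` in the direction `v`. -/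
def clarkeDeriv (φ : X → ℝ) (x v : X) : ℝ :=
  Filter.limsup (fun p : X × ℝ => (φ (p.1 + p.2 • v) - φ p.1) / p.2)
    ((𝓝 x) ×ˢ (𝓝[>] (0 : ℝ)))

/-- The Clarke subdifferential of `φ` at `x`. -/
def clarkeSubdiff (φ : X → ℝ) (x : X) : Set (StrongDual ℝ X) :=
  {x' | ∀ v : X, x' v ≤ clarkeDeriv φ x v}

/-- `λ_F(x)`, the minimal norm of elements of the Clarke subdifferential of `F` at `x`. -/
def lambdaF (F : X → ℝ) (x : X) : ℝ :=
  sInf ((fun w : StrongDual ℝ X => ‖w‖) '' clarkeSubdiff F x)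

/-- The Banach constant `C(T) = inf {‖T* y*‖ : ‖y*‖ = 1}`. -/
def banachC (T : X →L[ℝ] Y) : ℝ :=
  sInf ((fun y' : StrongDual ℝ Y => ‖y'.comp T‖) '' {y' | ‖y'‖ = 1})

/-- The dual Banach constant `C*(T) = inf {‖T u‖ : ‖u‖ = 1}`. -/
def banachCStar (T : X →L[ℝ] Y) : ℝ :=
  sInf ((fun u : X => ‖T u‖) '' {u : X | ‖u‖ = 1})

/-- `sur Jf(x) = sup_{r>0} inf {C(T) : T ∈ co Jf(B(x;r))}`. -/
def surJ (Jf : X → Set (X →L[ℝ] Y)) (x : X) : ℝ :=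
  sSup {c : ℝ | ∃ r > (0 : ℝ),
    c = sInf (banachC '' convexHull ℝ (⋃ z ∈ ball x r, Jf z))}

/-- `inj Jf(x) = sup_{r>0} inf {C*(T) : T ∈ co Jf(B(x;r))}`. -/
def injJ (Jf : X → Set (X →L[ℝ] Y)) (x : X) : ℝ :=
  sSup {c : ℝ | ∃ r > (0 : ℝ),
    c = sInf (banachCStar '' convexHull ℝ (⋃ z ∈ ball x r, Jf z))}

/-- `Δ F_y(x) = ∂‖·‖(f(x)-y) ∘ co̅(Jf(x))`. -/
def DeltaF (f : X → Y) (Jf : X → Set (X →L[ℝ] Y)) (y : Y) (x : X) :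
    Set (StrongDual ℝ X) :=
  {w | ∃ y' ∈ clarkeSubdiff (fun z : Y => ‖z‖) (f x - y),
      ∃ T ∈ closure (convexHull ℝ (Jf x)), w = ContinuousLinearMap.comp y' T}

/-- The chain rule condition for the pseudo-Jacobian mapping `Jf` of `f` on `U`. -/
def ChainRuleCond (f : X → Y) (Jf : X → Set (X →L[ℝ] Y)) (U : Set X) : Prop :=
  ∀ x ∈ U, ∀ y : Y, y ≠ f x →
    IsClosed (StrongDual.toWeakDual '' DeltaF f Jf y x) ∧
    Convex ℝ (DeltaF f Jf y x) ∧
    IsPseudoJacobianAt (fun z : X => ‖f z - y‖) x (DeltaF f Jf y x)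

/-- The strong chain rule condition: the chain rule condition, `f` locally Lipschitz,
and `Δ F_y(x)` contains the Clarke subdifferential of `F_y` at `x`. -/
def StrongChainRuleCond (f : X → Y) (Jf : X → Set (X →L[ℝ] Y)) (U : Set X) : Prop :=
  ChainRuleCond f Jf U ∧
  (∀ x ∈ U, ∃ K : NNReal, ∃ t ∈ 𝓝 x, LipschitzOnWith K f t) ∧
  ∀ x ∈ U, ∀ y : Y, y ≠ f x →
    clarkeSubdiff (fun z : X => ‖f z - y‖) x ⊆ DeltaF f Jf y x

/-- `Jf` is regular at `x₀`. -/
def RegularAt (Jf : X → Set (X →L[ℝ] Y)) (x₀ : X) : Prop :=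
  (∃ r > (0 : ℝ), ∀ T ∈ convexHull ℝ (⋃ z ∈ ball x₀ r, Jf z),
      ∃ e : X ≃L[ℝ] Y, (e : X →L[ℝ] Y) = T) ∧
  surJ Jf x₀ = injJ Jf x₀ ∧ 0 < surJ Jf x₀

/-- The regularity index `reg Jf(x₀)`. -/
def regJ (Jf : X → Set (X →L[ℝ] Y)) (x₀ : X) : ℝ := surJ Jf x₀

/-- `f` is open with linear rate around `x₀`. -/
def OpenWithLinearRateAt (f : X → Y) (x₀ : X) : Prop :=
  ∃ V ∈ 𝓝 x₀, ∃ α > (0 : ℝ), ∀ x ∈ V, ∀ r > (0 : ℝ), ball x r ⊆ V →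
    ball (f x) (α * r) ⊆ f '' ball x r

/-- `h` is a weight: continuous, nondecreasing, nonnegative on `[0,∞)`,
with `∫₀^∞ dρ/(1+h(ρ)) = ∞`. -/
def IsWeight (h : ℝ → ℝ) : Prop :=
  ContinuousOn h (Ici 0) ∧ MonotoneOn h (Ici 0) ∧ (∀ ρ ∈ Ici (0 : ℝ), 0 ≤ h ρ) ∧
  ∫⁻ ρ in Ioi (0 : ℝ), ENNReal.ofReal (1 / (1 + h ρ)) = ⊤

/-- The weighted Chang–Palais–Smale condition for `F` with respect to the weight `h`. -/
def ChangPS (F : X → ℝ) (h : ℝ → ℝ) : Prop :=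
  ∀ u : ℕ → X, (∃ M : ℝ, ∀ n, |F (u n)| ≤ M) →
    Tendsto (fun n => lambdaF F (u n) * (1 + h ‖u n‖)) atTop (𝓝 0) →
    ∃ φ : ℕ → ℕ, StrictMono φ ∧ ∃ z : X, Tendsto ((fun n => u n) ∘ φ) atTop (𝓝 z)

/-- The local Lipschitz constant of `g` at `y`. -/
def lipConstAt (g : Y → X) (y : Y) : ℝ :=
  sInf {c : ℝ | ∃ r > (0 : ℝ), c = sSup {q : ℝ | ∃ u ∈ ball y r, ∃ w ∈ ball y r,
    u ≠ w ∧ q = ‖g u - g w‖ / ‖u - w‖}}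


section ChangPSAuxiliary

variable {α : Type*}

private lemma aux_limsup_mul_zero {l : Filter α} [l.NeBot] {a b : α → ℝ} {B : ℝ}
    (ha : Tendsto a l (𝓝 0)) (hB : ∀ᶠ p in l, |b p| ≤ B) :
    Filter.limsup (fun p => a p * b p) l = 0 := by
  have hten : Tendsto (fun p => a p * b p) l (𝓝 0) := by
    have h1 : Tendsto (fun p => |a p| * B) l (𝓝 0) := by
      have := (ha.abs).mul_const B
      simpa using this
    apply squeeze_zero_norm' _ h1
    filter_upwards [hB] with p hp
    have : |a p * b p| = |a p| * |b p| := abs_mul _ _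
    rw [Real.norm_eq_abs, this]
    exact mul_le_mul_of_nonneg_left hp (abs_nonneg _)
  exact hten.limsup_eq

private lemma aux_limsup_mul_eq {l : Filter α} [l.NeBot] {a b : α → ℝ} {c B : ℝ}
    (hc : 0 < c) (ha : Tendsto a l (𝓝 c)) (hB : ∀ᶠ p in l, |b p| ≤ B) :
    Filter.limsup (fun p => a p * b p) l = c * Filter.limsup b l := by
  obtain ⟨p₀, hp₀⟩ := hB.exists
  have hB0 : 0 ≤ B := le_trans (abs_nonneg _) hp₀
  have hbub : Filter.IsBoundedUnder (· ≤ ·) l b :=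
    ⟨B, Filter.eventually_map.2 (hB.mono fun p hp => (abs_le.1 hp).2)⟩
  have hblb : Filter.IsBoundedUnder (· ≥ ·) l b :=
    ⟨-B, Filter.eventually_map.2 (hB.mono fun p hp => (abs_le.1 hp).1)⟩
  set L := Filter.limsup b l with hL
  -- eventual closeness
  have hclose : ∀ ε : ℝ, 0 < ε → ∀ᶠ p in l,
      a p * b p ≤ c * b p + ε ∧ c * b p - ε ≤ a p * b p := by
    intro ε hε
    have hδ : 0 < ε / (B + 1) := by positivity
    have h1 : ∀ᶠ p in l, |a p - c| < ε / (B + 1) := by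
      have := Metric.tendsto_nhds.1 ha (ε / (B + 1)) hδ
      simpa [Real.dist_eq] using this
    filter_upwards [h1, hB] with p h1p hBp
    have key : |a p * b p - c * b p| ≤ ε := by
      have : a p * b p - c * b p = (a p - c) * b p := by ring
      rw [this, abs_mul]
      calc |a p - c| * |b p| ≤ (ε / (B + 1)) * (B + 1) := by
            apply mul_le_mul h1p.le (le_trans hBp (by linarith)) (abs_nonneg _) hδ.le
        _ = ε := by field_simp
    constructor
    · linarith [(abs_le.1 key).2]
    · linarith [(abs_le.1 key).1]
  have habub : Filter.IsBoundedUnder (· ≤ ·) l (fun p => a p * b p) := by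
    refine ⟨c * B + 1, ?_⟩
    rw [Filter.eventually_map]
    filter_upwards [hclose 1 one_pos, hB] with p hp hBp
    have : c * b p ≤ c * B := mul_le_mul_of_nonneg_left (abs_le.1 hBp).2 hc.le
    linarith [hp.1]
  have hacob : Filter.IsCoboundedUnder (· ≤ ·) l (fun p => a p * b p) := by
    apply Filter.IsBoundedUnder.isCoboundedUnder_le
    refine ⟨c * (-B) - 1, ?_⟩
    rw [Filter.eventually_map]
    filter_upwards [hclose 1 one_pos, hB] with p hp hBp
    have : c * (-B) ≤ c * b p := mul_le_mul_of_nonneg_left (abs_le.1 hBp).1 hc.le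
    linarith [hp.2]
  apply le_antisymm
  · apply le_of_forall_pos_le_add
    intro ε hε
    have hev : ∀ᶠ p in l, a p * b p ≤ c * L + ε := by
      have hlt : L < L + ε / (2 * c) := by
        have : 0 < ε / (2 * c) := by positivity
        linarith
      have h2 := Filter.eventually_lt_of_limsup_lt hlt hbub
      filter_upwards [hclose (ε / 2) (by positivity), h2] with p h1p h2p
      have : c * b p ≤ c * (L + ε / (2 * c)) := mul_le_mul_of_nonneg_left h2p.le hc.le
      have hcc : c * (L + ε / (2 * c)) = c * L + ε / 2 := by field_simp
      calc a p * b p ≤ c * b p + ε / 2 := h1p.1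
        _ ≤ c * L + ε / 2 + ε / 2 := by rw [hcc] at this; linarith
        _ ≤ c * L + ε := by linarith
    exact Filter.limsup_le_of_le hacob hev
  · apply le_of_forall_pos_le_add
    intro ε hε
    have hfreq : ∃ᶠ p in l, L - ε / (2 * c) < b p := by
      apply Filter.frequently_lt_of_lt_limsup hblb.isCoboundedUnder_le
      have : 0 < ε / (2 * c) := by positivity
      linarith
    have hev := hclose (ε / 2) (by positivity)
    have hfreq2 : ∃ᶠ p in l, c * L - ε ≤ a p * b p := by
      apply (hfreq.and_eventually hev).mono
      rintro p ⟨h1p, h2p, h3p⟩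
      have : c * (L - ε / (2 * c)) ≤ c * b p := mul_le_mul_of_nonneg_left h1p.le hc.le
      have hcc : c * (L - ε / (2 * c)) = c * L - ε / 2 := by field_simp
      rw [hcc] at this
      linarith
    have := Filter.le_limsup_of_frequently_le hfreq2 habub
    linarith

private lemma aux_clarke_sq {X : Type*} [NormedAddCommGroup X] [NormedSpace ℝ X]
    (F : X → ℝ) (x : X) {K r : ℝ} (hr : 0 < r) (hK : 0 ≤ K) (hFx : 0 ≤ F x)
    (hL : ∀ a ∈ ball x r, ∀ b ∈ ball x r, |F a - F b| ≤ K * ‖a - b‖) (v : X) :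
    clarkeDeriv (fun z => (1 / 2 : ℝ) * F z ^ 2) x v = F x * clarkeDeriv F x v := by
  set l : Filter (X × ℝ) := (𝓝 x) ×ˢ (𝓝[>] (0 : ℝ)) with hl
  haveI : (𝓝[>] (0 : ℝ)).NeBot := nhdsGT_neBot 0
  haveI : l.NeBot := by rw [hl]; infer_instance
  set δ := r / (2 * (‖v‖ + 1)) with hδdef
  have hδ : 0 < δ := by positivity
  have hmem : ∀ᶠ p : X × ℝ in l, p.1 ∈ ball x (r / 2) ∧ p.1 + p.2 • v ∈ ball x r ∧ 0 < p.2 := by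
    have h1 : ∀ᶠ z in 𝓝 x, z ∈ ball x (r / 2) := ball_mem_nhds x (by positivity)
    have h2 : ∀ᶠ t in 𝓝[>] (0 : ℝ), t ∈ Set.Ioo (0 : ℝ) δ :=
      Ioo_mem_nhdsGT_of_mem ⟨le_refl 0, hδ⟩
    apply (Filter.Eventually.prod_mk h1 h2).mono
    rintro ⟨z, t⟩ ⟨hz, ht⟩
    refine ⟨hz, ?_, ht.1⟩
    have h3 : ‖z + t • v - x‖ ≤ ‖z - x‖ + t * ‖v‖ := by
      calc ‖z + t • v - x‖ = ‖(z - x) + t • v‖ := by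
            congr 1
            abel
        _ ≤ ‖z - x‖ + ‖t • v‖ := norm_add_le _ _
        _ = ‖z - x‖ + t * ‖v‖ := by rw [norm_smul, Real.norm_of_nonneg ht.1.le]
    have h4 : t * ‖v‖ ≤ δ * (‖v‖ + 1) := by
      apply mul_le_mul ht.2.le (by linarith) (norm_nonneg v) hδ.le
    have h5 : δ * (‖v‖ + 1) = r / 2 := by rw [hδdef]; field_simp
    have h6 : ‖z - x‖ < r / 2 := by simpa [mem_ball, dist_eq_norm] using hz
    simp only [mem_ball, dist_eq_norm]
    linarith
  have hq : ∀ᶠ p : X × ℝ in l, |(F (p.1 + p.2 • v) - F p.1) / p.2| ≤ K * ‖v‖ := by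
    apply hmem.mono
    rintro ⟨z, t⟩ ⟨hz, hzt, ht⟩
    have hz' : z ∈ ball x r := ball_subset_ball (by linarith) hz
    have h1 : |F (z + t • v) - F z| ≤ K * (t * ‖v‖) := by
      have := hL _ hzt _ hz'
      have he : z + t • v - z = t • v := by abel
      rw [he, norm_smul, Real.norm_of_nonneg ht.le] at this
      exact this
    rw [abs_div, abs_of_pos ht, div_le_iff₀ ht]
    calc |F (z + t • v) - F z| ≤ K * (t * ‖v‖) := h1
      _ = K * ‖v‖ * t := by ring
  have hcont : ContinuousAt F x := by
    have hlip : LipschitzOnWith (Real.toNNReal K) F (ball x r) := by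
      apply LipschitzOnWith.of_dist_le'
      intro a ha b hb
      rw [Real.dist_eq, dist_eq_norm]
      exact hL a ha b hb
    exact hlip.continuousOn.continuousAt (ball_mem_nhds x hr)
  have hc1 : Tendsto (fun p : X × ℝ => p.1) l (𝓝 x) := tendsto_fst
  have hc2 : Tendsto (fun p : X × ℝ => p.1 + p.2 • v) l (𝓝 x) := by
    have hsnd : Tendsto (fun p : X × ℝ => p.2) l (𝓝 (0 : ℝ)) :=
      tendsto_snd.mono_right nhdsWithin_le_nhds
    have := hc1.add (hsnd.smul_const v)
    simpa using this
  have ha : Tendsto (fun p : X × ℝ => (F (p.1 + p.2 • v) + F p.1) / 2) l (𝓝 (F x)) := by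
    have := ((hcont.tendsto.comp hc2).add (hcont.tendsto.comp hc1)).div_const 2
    have he : (F x + F x) / 2 = F x := by ring
    rw [he] at this
    exact this
  have hEq : ∀ᶠ p : X × ℝ in l,
      ((1 / 2 : ℝ) * F (p.1 + p.2 • v) ^ 2 - (1 / 2 : ℝ) * F p.1 ^ 2) / p.2 =
      ((F (p.1 + p.2 • v) + F p.1) / 2) * ((F (p.1 + p.2 • v) - F p.1) / p.2) := by
    apply hmem.mono
    rintro ⟨z, t⟩ ⟨-, -, ht⟩
    have ht' : t ≠ 0 := ht.ne'
    field_simp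
    ring
  have hmain : clarkeDeriv (fun z => (1 / 2 : ℝ) * F z ^ 2) x v =
      Filter.limsup (fun p : X × ℝ =>
        ((F (p.1 + p.2 • v) + F p.1) / 2) * ((F (p.1 + p.2 • v) - F p.1) / p.2)) l := by
    rw [clarkeDeriv]
    exact Filter.limsup_congr hEq
  rcases eq_or_lt_of_le hFx with hc | hc
  · rw [hmain, aux_limsup_mul_zero (by rw [← hc] at ha; exact ha) hq, ← hc, zero_mul]
  · rw [hmain, aux_limsup_mul_eq hc ha hq]
    rfl

private lemma aux_lambdaF_nonneg {X : Type*} [NormedAddCommGroup X] [NormedSpace ℝ X]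
    (F : X → ℝ) (x : X) : 0 ≤ lambdaF F x := by
  apply Real.sInf_nonneg
  rintro s ⟨w, -, rfl⟩
  exact norm_nonneg w

private lemma aux_lambda_le {X Y : Type*} [NormedAddCommGroup X] [NormedSpace ℝ X]
    [NormedAddCommGroup Y] [NormedSpace ℝ Y]
    (f : X → Y) (hf : LocallyLipschitz f) (y : Y) (x : X) :
    lambdaF (fun z : X => (1 / 2 : ℝ) * ‖f z - y‖ ^ 2) x ≤
      ‖f x - y‖ * lambdaF (fun z : X => ‖f z - y‖) x := by
  set F : X → ℝ := fun z => ‖f z - y‖ with hFdef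
  set G : X → ℝ := fun z => (1 / 2 : ℝ) * ‖f z - y‖ ^ 2 with hGdef
  obtain ⟨K, t, ht, hlip⟩ := hf x
  obtain ⟨r, hr, hball⟩ := Metric.mem_nhds_iff.1 ht
  have hK : (0 : ℝ) ≤ (K : ℝ) := (K : NNReal).coe_nonneg
  have hL : ∀ a ∈ ball x r, ∀ b ∈ ball x r, |F a - F b| ≤ (K : ℝ) * ‖a - b‖ := by
    intro a ha b hb
    have h1 : dist (f a) (f b) ≤ (K : ℝ) * dist a b := hlip.dist_le_mul a (hball ha) b (hball hb)
    calc |F a - F b| = |‖f a - y‖ - ‖f b - y‖| := rfl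
      _ ≤ ‖(f a - y) - (f b - y)‖ := abs_norm_sub_norm_le _ _
      _ = dist (f a) (f b) := by rw [dist_eq_norm]; congr 1; abel
      _ ≤ (K : ℝ) * dist a b := h1
      _ = (K : ℝ) * ‖a - b‖ := by rw [dist_eq_norm]
  have hFx : 0 ≤ F x := norm_nonneg _
  have hcd : ∀ v : X, clarkeDeriv G x v = F x * clarkeDeriv F x v := fun v =>
    aux_clarke_sq F x hr hK hFx hL v
  set c := F x with hcdef
  have hcx : ‖f x - y‖ = c := rfl
  rw [hcx]
  have hmemG : ∀ w ∈ clarkeSubdiff F x, c • w ∈ clarkeSubdiff G x := by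
    intro w hw v
    have h1 : (c • w) v = c * w v := rfl
    rw [h1, hcd v]
    exact mul_le_mul_of_nonneg_left (hw v) hFx
  have hbddG : BddBelow ((fun w : StrongDual ℝ X => ‖w‖) '' clarkeSubdiff G x) := by
    refine ⟨0, ?_⟩
    rintro s ⟨w, -, rfl⟩
    exact norm_nonneg w
  rcases eq_or_lt_of_le hFx with hc0 | hc0
  · -- c = 0 : 0 ∈ ∂G, so λ_G ≤ 0 = c * λ_F
    have h0G : (0 : StrongDual ℝ X) ∈ clarkeSubdiff G x := by
      intro v
      rw [hcd v, ← hc0, zero_mul]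
      simp
    have : lambdaF G x ≤ 0 := by
      have := csInf_le hbddG ⟨(0 : StrongDual ℝ X), h0G, norm_zero⟩
      exact this
    calc lambdaF G x ≤ 0 := this
      _ ≤ c * lambdaF F x := by
          rw [← hc0, zero_mul]
  · rcases (clarkeSubdiff F x).eq_empty_or_nonempty with hS | hS
    · -- ∂F empty ⇒ ∂G empty ⇒ λ_G = 0
      have hGempty : clarkeSubdiff G x = ∅ := by
        rw [Set.eq_empty_iff_forall_notMem]
        intro w' hw'
        have : c⁻¹ • w' ∈ clarkeSubdiff F x := by
          intro v
          have h1 : (c⁻¹ • w') v = c⁻¹ * w' v := rfl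
          rw [h1]
          have h2 : w' v ≤ clarkeDeriv G x v := hw' v
          rw [hcd v] at h2
          calc c⁻¹ * w' v ≤ c⁻¹ * (c * clarkeDeriv F x v) :=
                mul_le_mul_of_nonneg_left h2 (inv_nonneg.2 hc0.le)
            _ = clarkeDeriv F x v := by field_simp
        rw [hS] at this
        exact this
      have h1 : lambdaF G x = 0 := by
        rw [lambdaF, hGempty, Set.image_empty, Real.sInf_empty]
      have h2 : lambdaF F x = 0 := by
        rw [lambdaF, hS, Set.image_empty, Real.sInf_empty]
      rw [h1, h2, mul_zero]
    · -- general case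
      have key : ∀ s ∈ (fun w : StrongDual ℝ X => ‖w‖) '' clarkeSubdiff F x,
          lambdaF G x ≤ c * s := by
        rintro s ⟨w, hw, rfl⟩
        apply csInf_le hbddG
        refine ⟨c • w, hmemG w hw, ?_⟩
        show ‖c • w‖ = c * ‖w‖
        rw [norm_smul, Real.norm_of_nonneg hc0.le]
      have h1 : lambdaF G x / c ≤ lambdaF F x := by
        apply le_csInf (hS.image _)
        intro s hs
        rw [div_le_iff₀ hc0]
        calc lambdaF G x ≤ c * s := key s hs
          _ = s * c := mul_comm _ _
      calc lambdaF G x = c * (lambdaF G x / c) := by field_simp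
        _ ≤ c * lambdaF F x := mul_le_mul_of_nonneg_left h1 hc0.le

end ChangPSAuxiliary

/-- If `G_y(x) = (1/2)‖f(x) − y‖²` satisfies the weighted Chang–Palais–Smale condition with
respect to a weight `h`, then so does `F_y(x) = ‖f(x) − y‖`. -/
theorem changPS_of_squared {X Y : Type*}
    [NormedAddCommGroup X] [NormedSpace ℝ X] [CompleteSpace X]
    [NormedAddCommGroup Y] [NormedSpace ℝ Y] [CompleteSpace Y]
    (f : X → Y) (hf : LocallyLipschitz f) (y : Y)
    (h : ℝ → ℝ) (hw : IsWeight h)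
    (hG : ChangPS (fun x : X => (1 / 2 : ℝ) * ‖f x - y‖ ^ 2) h) :
    ChangPS (fun x : X => ‖f x - y‖) h := by
  intro u hMex hT
  obtain ⟨M, hM⟩ := hMex
  have hM0 : 0 ≤ M := le_trans (abs_nonneg _) (hM 0)
  have hFle : ∀ n, ‖f (u n) - y‖ ≤ M := fun n => le_trans (le_abs_self _) (hM n)
  apply hG u
  · refine ⟨(1 / 2 : ℝ) * M ^ 2, fun n => ?_⟩
    have h0 : (0 : ℝ) ≤ ‖f (u n) - y‖ := norm_nonneg _
    rw [abs_of_nonneg (by positivity)]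
    nlinarith [hFle n]
  · have h1pos : ∀ n, (0 : ℝ) ≤ 1 + h ‖u n‖ := by
      intro n
      have := hw.2.2.1 ‖u n‖ (norm_nonneg _)
      linarith
    apply squeeze_zero
      (f := fun n => lambdaF (fun x : X => (1 / 2 : ℝ) * ‖f x - y‖ ^ 2) (u n) * (1 + h ‖u n‖))
      (g := fun n => M * (lambdaF (fun x : X => ‖f x - y‖) (u n) * (1 + h ‖u n‖)))
    · intro n
      exact mul_nonneg (aux_lambdaF_nonneg _ _) (h1pos n)
    · intro n
      have key : lambdaF (fun x : X => (1 / 2 : ℝ) * ‖f x - y‖ ^ 2) (u n) ≤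
          M * lambdaF (fun x : X => ‖f x - y‖) (u n) := by
        calc lambdaF (fun x : X => (1 / 2 : ℝ) * ‖f x - y‖ ^ 2) (u n) ≤
            ‖f (u n) - y‖ * lambdaF (fun x : X => ‖f x - y‖) (u n) := aux_lambda_le f hf y (u n)
          _ ≤ M * lambdaF (fun x : X => ‖f x - y‖) (u n) :=
            mul_le_mul_of_nonneg_right (hFle n) (aux_lambdaF_nonneg _ _)
      calc lambdaF (fun x : X => (1 / 2 : ℝ) * ‖f x - y‖ ^ 2) (u n) * (1 + h ‖u n‖) ≤
          M * lambdaF (fun x : X => ‖f x - y‖) (u n) * (1 + h ‖u n‖) :=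
            mul_le_mul_of_nonneg_right key (h1pos n)
        _ = M * (lambdaF (fun x : X => ‖f x - y‖) (u n) * (1 + h ‖u n‖)) := by ring
    · have := hT.const_mul M
      simpa using this
end
end

section
/- Let X be a real Banach space, F : X → ℝ a locally Lipschitz functional bounded from below, and h any weight. Then there exists a sequence {xₙ} in X such that F(xₙ) → inf_X F and λ_F(xₙ)(1 + h(‖xₙ‖)) → 0. -/
open Filter Topology Metric Set MeasureTheory

noncomputable section

variable {X Y : Type*} [NormedAddCommGroup X] [NormedSpace ℝ X]
  [NormedAddCommGroup Y] [NormedSpace ℝ Y]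

/-! ### Auxiliary lemmas for the proof -/

section CPSAux
set_option linter.unusedSectionVars false

open Filter Pointwise

variable {E : Type*} [NormedAddCommGroup E] [NormedSpace ℝ E]

private lemma cQuot_bound {F : E → ℝ} (hF : LocallyLipschitz F) (x v : E) :
    ∃ C : ℝ, ∀ᶠ p in (𝓝 x) ×ˢ (𝓝[>] (0:ℝ)),
      |(F (p.1 + p.2 • v) - F p.1) / p.2| ≤ C := by
  obtain ⟨K, t, ht, hK⟩ := hF x
  obtain ⟨r, hr, hball⟩ := Metric.mem_nhds_iff.1 ht
  refine ⟨K * ‖v‖, ?_⟩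
  have h1 : ∀ᶠ z in 𝓝 x, z ∈ ball x (r/2) := ball_mem_nhds _ (by positivity)
  have h2 : ∀ᶠ s in 𝓝[>] (0:ℝ), s ∈ Ioo 0 (r/(2*(‖v‖+1))) :=
    Ioo_mem_nhdsGT_of_mem ⟨le_refl 0, by positivity⟩
  filter_upwards [h1.prod_mk h2] with p hp
  obtain ⟨hz, hs0, hs1⟩ : p.1 ∈ ball x (r/2) ∧ 0 < p.2 ∧ p.2 < r/(2*(‖v‖+1)) :=
    ⟨hp.1, hp.2.1, hp.2.2⟩
  have hsv : p.2 * ‖v‖ < r / 2 := by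
    have h3 : p.2 * ‖v‖ ≤ p.2 * (‖v‖ + 1) := by nlinarith [norm_nonneg v]
    have h4 : p.2 * (2*(‖v‖+1)) < r := (lt_div_iff₀ (by positivity)).1 hs1
    nlinarith
  have hz1 : p.1 ∈ ball x r := by
    rw [mem_ball] at hz ⊢; linarith [hz]
  have hz2 : p.1 + p.2 • v ∈ ball x r := by
    rw [mem_ball, dist_eq_norm] at hz ⊢
    calc ‖p.1 + p.2 • v - x‖ ≤ ‖p.1 - x‖ + ‖p.2 • v‖ := by
          rw [add_sub_right_comm]; exact norm_add_le _ _
      _ < r/2 + r/2 := by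
          rw [norm_smul, Real.norm_eq_abs, abs_of_pos hs0]
          exact add_lt_add hz hsv
      _ = r := by ring
  have hlip := hK.dist_le_mul _ (hball hz2) _ (hball hz1)
  rw [Real.dist_eq] at hlip
  rw [abs_div, abs_of_pos hs0, div_le_iff₀ hs0]
  calc |F (p.1 + p.2 • v) - F p.1| ≤ K * dist (p.1 + p.2 • v) p.1 := hlip
    _ = K * (p.2 * ‖v‖) := by
        rw [dist_eq_norm, add_sub_cancel_left, norm_smul, Real.norm_eq_abs, abs_of_pos hs0]
    _ = K * ‖v‖ * p.2 := by ring

private lemma quot_bddle {F : E → ℝ} (hF : LocallyLipschitz F) (x v : E) :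
    IsBoundedUnder (· ≤ ·) ((𝓝 x) ×ˢ (𝓝[>] (0:ℝ)))
      (fun p : E × ℝ => (F (p.1 + p.2 • v) - F p.1) / p.2) := by
  obtain ⟨C, hC⟩ := cQuot_bound hF x v
  exact ⟨C, by rw [eventually_map]; exact hC.mono fun p hp => (abs_le.1 hp).2⟩

private lemma quot_bddge {F : E → ℝ} (hF : LocallyLipschitz F) (x v : E) :
    IsBoundedUnder (· ≥ ·) ((𝓝 x) ×ˢ (𝓝[>] (0:ℝ)))
      (fun p : E × ℝ => (F (p.1 + p.2 • v) - F p.1) / p.2) := by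
  obtain ⟨C, hC⟩ := cQuot_bound hF x v
  exact ⟨-C, by rw [eventually_map]; exact hC.mono fun p hp => (abs_le.1 hp).1⟩

private lemma clarkeDeriv_zero (F : E → ℝ) (x : E) : clarkeDeriv F x 0 = 0 := by
  have h : (fun p : E × ℝ => (F (p.1 + p.2 • (0:E)) - F p.1) / p.2) = fun _ => (0:ℝ) := by
    funext p; simp
  rw [clarkeDeriv, h, limsup_const]

private lemma limsup_map_eq {α γ : Type*} (u : γ → ℝ) (m : α → γ) (l : Filter α) :
    limsup u (Filter.map m l) = limsup (fun a => u (m a)) l := by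
  simp only [Filter.limsup, Filter.map_map]; rfl

private lemma tendsto_mul_right_Ioi {a : ℝ} (ha : 0 < a) :
    Tendsto (fun t : ℝ => t * a) (𝓝[>] (0:ℝ)) (𝓝[>] (0:ℝ)) := by
  rw [tendsto_nhdsWithin_iff]
  constructor
  · have h := (continuous_mul_right a).tendsto (0:ℝ)
    simp only [zero_mul] at h
    exact h.mono_left nhdsWithin_le_nhds
  · filter_upwards [self_mem_nhdsWithin] with t ht
    exact mul_pos ht ha

private lemma tendsto_scale (a : ℝ) (ha : 0 < a) (x : E) :
    Tendsto (fun p : E × ℝ => (p.1, p.2 * a)) ((𝓝 x) ×ˢ (𝓝[>] (0:ℝ)))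
      ((𝓝 x) ×ˢ (𝓝[>] (0:ℝ))) :=
  (tendsto_fst.prodMk ((tendsto_mul_right_Ioi ha).comp tendsto_snd))

private lemma map_scale_eq (a : ℝ) (ha : 0 < a) (x : E) :
    Filter.map (fun p : E × ℝ => (p.1, p.2 * a)) ((𝓝 x) ×ˢ (𝓝[>] (0:ℝ)))
      = (𝓝 x) ×ˢ (𝓝[>] (0:ℝ)) := by
  refine le_antisymm (tendsto_scale a ha x) ?_
  have h2 := Filter.map_mono (m := fun p : E × ℝ => (p.1, p.2 * a))
    (tendsto_scale a⁻¹ (inv_pos.2 ha) x)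
  rw [Filter.map_map] at h2
  have hco : ((fun p : E × ℝ => (p.1, p.2 * a)) ∘ (fun p : E × ℝ => (p.1, p.2 * a⁻¹)))
      = id := by
    funext p
    simp [Function.comp, mul_assoc, inv_mul_cancel₀ ha.ne']
  rwa [hco, Filter.map_id] at h2

private lemma clarkeDeriv_smul {F : E → ℝ} (hF : LocallyLipschitz F) (x v : E)
    {a : ℝ} (ha : 0 < a) : clarkeDeriv F x (a • v) = a * clarkeDeriv F x v := by
  set w : E × ℝ → ℝ := fun p => (F (p.1 + p.2 • v) - F p.1) / p.2 with hw
  set L := (𝓝 x) ×ˢ (𝓝[>] (0:ℝ)) with hL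
  have hfun : (fun p : E × ℝ => (F (p.1 + p.2 • (a • v)) - F p.1) / p.2)
      = fun p : E × ℝ => a * w (p.1, p.2 * a) := by
    funext p
    rcases eq_or_ne p.2 0 with h0 | h0
    · simp [hw, h0]
    · simp only [hw, smul_smul]
      rw [eq_comm, mul_comm p.2 a]
      rw [mul_div_assoc']
      rw [div_eq_div_iff (by simpa [ha.ne'] using h0) h0]
      ring
  rw [clarkeDeriv, clarkeDeriv, hfun]
  have h1 : limsup (fun p : E × ℝ => a * w (p.1, p.2 * a)) L
      = limsup (fun p : E × ℝ => a * w p) L := by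
    conv_rhs => rw [hL, ← map_scale_eq a ha x, limsup_map_eq]
  rw [h1]
  have hble := quot_bddle hF x v
  have hbge := quot_bddge hF x v
  have hble' : IsBoundedUnder (· ≤ ·) L (fun p => a * w p) := by
    obtain ⟨b, hb⟩ := hble
    refine ⟨a * b, ?_⟩
    rw [eventually_map] at hb ⊢
    exact hb.mono fun p hp => mul_le_mul_of_nonneg_left hp ha.le
  have hbge' : IsBoundedUnder (· ≥ ·) L (fun p => a * w p) := by
    obtain ⟨b, hb⟩ := hbge
    refine ⟨a * b, ?_⟩
    rw [eventually_map] at hb ⊢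
    exact hb.mono fun p hp => mul_le_mul_of_nonneg_left hp ha.le
  have := (OrderIso.mulLeft₀ a ha).limsup_apply (f := L) (u := w)
    hble (hbge.isCoboundedUnder_le) hble' (hbge'.isCoboundedUnder_le)
  simpa using this.symm

private lemma real_limsup_add_le {α : Type*} {l : Filter α} [l.NeBot] {f g : α → ℝ}
    (hf1 : IsBoundedUnder (· ≤ ·) l f) (hf2 : IsBoundedUnder (· ≥ ·) l f)
    (hg1 : IsBoundedUnder (· ≤ ·) l g) (hg2 : IsBoundedUnder (· ≥ ·) l g) :
    limsup (fun a => f a + g a) l ≤ limsup f l + limsup g l := by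
  refine le_of_forall_pos_le_add fun δ hδ => ?_
  have h1 : ∀ᶠ a in l, f a < limsup f l + δ/2 :=
    eventually_lt_of_limsup_lt (lt_add_of_pos_right _ (half_pos hδ)) hf1
  have h2 : ∀ᶠ a in l, g a < limsup g l + δ/2 :=
    eventually_lt_of_limsup_lt (lt_add_of_pos_right _ (half_pos hδ)) hg1
  have hco : IsCoboundedUnder (· ≤ ·) l (fun a => f a + g a) := by
    obtain ⟨b, hb⟩ := hf2
    obtain ⟨c, hc⟩ := hg2
    rw [eventually_map] at hb hc
    refine IsBoundedUnder.isCoboundedUnder_le ⟨b + c, ?_⟩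
    rw [eventually_map]
    exact (hb.and hc).mono fun a ha => add_le_add ha.1 ha.2
  refine limsup_le_of_le hco ?_
  filter_upwards [h1, h2] with a ha1 ha2
  linarith

private lemma tendsto_shift (x u : E) :
    Tendsto (fun p : E × ℝ => (p.1 + p.2 • u, p.2)) ((𝓝 x) ×ˢ (𝓝[>] (0:ℝ)))
      ((𝓝 x) ×ˢ (𝓝[>] (0:ℝ))) := by
  refine Tendsto.prodMk ?_ tendsto_snd
  have hc : Tendsto (fun p : E × ℝ => p.1 + p.2 • u) (𝓝 (x, (0:ℝ))) (𝓝 (x + (0:ℝ) • u)) :=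
    (continuous_fst.add (continuous_snd.smul continuous_const)).tendsto (x, 0)
  simp only [zero_smul, add_zero] at hc
  refine hc.mono_left ?_
  rw [nhds_prod_eq]
  exact Filter.prod_mono le_rfl nhdsWithin_le_nhds

private lemma clarkeDeriv_add_le {F : E → ℝ} (hF : LocallyLipschitz F) (x u v : E) :
    clarkeDeriv F x (u + v) ≤ clarkeDeriv F x u + clarkeDeriv F x v := by
  set L := (𝓝 x) ×ˢ (𝓝[>] (0:ℝ)) with hL
  set wu : E × ℝ → ℝ := fun p => (F (p.1 + p.2 • u) - F p.1) / p.2 with hwu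
  set wv : E × ℝ → ℝ := fun p => (F (p.1 + p.2 • v) - F p.1) / p.2 with hwv
  set m : E × ℝ → E × ℝ := fun p => (p.1 + p.2 • u, p.2) with hm
  have hfun : (fun p : E × ℝ => (F (p.1 + p.2 • (u + v)) - F p.1) / p.2)
      = fun p : E × ℝ => wu p + wv (m p) := by
    funext p
    simp only [hwu, hwv, hm, smul_add, ← add_assoc]
    rw [← add_div]
    congr 1
    ring
  have htm : Tendsto m L L := tendsto_shift x u
  have hvm_le : IsBoundedUnder (· ≤ ·) L (fun p => wv (m p)) := by
    obtain ⟨b, hb⟩ := quot_bddle hF x v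
    rw [eventually_map] at hb
    exact ⟨b, by rw [eventually_map]; exact htm.eventually hb⟩
  have hvm_ge : IsBoundedUnder (· ≥ ·) L (fun p => wv (m p)) := by
    obtain ⟨b, hb⟩ := quot_bddge hF x v
    rw [eventually_map] at hb
    exact ⟨b, by rw [eventually_map]; exact htm.eventually hb⟩
  rw [clarkeDeriv, clarkeDeriv, clarkeDeriv, hfun]
  calc limsup (fun p => wu p + wv (m p)) L
      ≤ limsup wu L + limsup (fun p => wv (m p)) L :=
        real_limsup_add_le (quot_bddle hF x u) (quot_bddge hF x u) hvm_le hvm_ge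
    _ ≤ limsup wu L + limsup wv L := by
        refine add_le_add le_rfl ?_
        have heq : limsup (fun p => wv (m p)) L = limsup wv (Filter.map m L) :=
          (limsup_map_eq wv m L).symm
        rw [heq]
        have hmap : (Filter.map m L).NeBot := Filter.map_neBot
        refine limsup_le_limsup_of_le htm ?_ (quot_bddle hF x v)
        obtain ⟨b, hb⟩ := hvm_ge
        rw [eventually_map] at hb
        exact IsBoundedUnder.isCoboundedUnder_le
          ⟨b, by rw [Filter.map_map, eventually_map]; exact hb⟩

private lemma lambdaF_nonneg (F : E → ℝ) (x : E) : 0 ≤ lambdaF F x := by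
  rw [lambdaF]
  apply Real.sInf_nonneg
  rintro y ⟨w, -, rfl⟩
  exact norm_nonneg w

private lemma lambdaF_le_of_clarkeDeriv_ge {F : E → ℝ} (hF : LocallyLipschitz F) (x : E)
    {c : ℝ} (hc : 0 ≤ c) (hall : ∀ v : E, -(c * ‖v‖) ≤ clarkeDeriv F x v) :
    lambdaF F x ≤ c := by
  set p : E → ℝ := clarkeDeriv F x with hp
  have hp0 : p 0 = 0 := clarkeDeriv_zero F x
  have hbdd : ∀ v : E, BddBelow (Set.range fun u => p u + c * ‖v - u‖) := by
    intro v
    refine ⟨-(c * ‖v‖), ?_⟩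
    rintro _ ⟨u, rfl⟩
    have h1 := hall u
    have h2 : ‖u‖ ≤ ‖v - u‖ + ‖v‖ := by
      have h3 := norm_sub_le v (v - u)
      rw [sub_sub_cancel] at h3
      linarith
    have h4 := mul_le_mul_of_nonneg_left h2 hc
    simp only [hp] at h1 ⊢
    nlinarith
  set q : E → ℝ := fun v => sInf (Set.range fun u => p u + c * ‖v - u‖) with hq
  have hq_le_p : ∀ v, q v ≤ p v := by
    intro v
    refine csInf_le (hbdd v) ⟨v, ?_⟩
    simp
  have hq_le_norm : ∀ v, q v ≤ c * ‖v‖ := by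
    intro v
    refine csInf_le (hbdd v) ⟨0, ?_⟩
    simp [hp0]
  have hq0 : 0 ≤ q 0 := by
    refine le_csInf ⟨_, ⟨0, rfl⟩⟩ ?_
    rintro b ⟨u, rfl⟩
    have h1 := hall u
    show 0 ≤ p u + c * ‖(0:E) - u‖
    rw [zero_sub, norm_neg]
    linarith
  have hNhom : ∀ a : ℝ, 0 < a → ∀ v, q (a • v) = a * q v := by
    intro a ha v
    have hset : (Set.range fun u => p u + c * ‖a • v - u‖)
        = (fun y => a * y) '' (Set.range fun u => p u + c * ‖v - u‖) := by
      ext y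
      constructor
      · rintro ⟨u, rfl⟩
        refine ⟨p (a⁻¹ • u) + c * ‖v - a⁻¹ • u‖, ⟨a⁻¹ • u, rfl⟩, ?_⟩
        have h1 : p u = a * p (a⁻¹ • u) := by
          rw [hp, ← clarkeDeriv_smul hF x _ ha, smul_inv_smul₀ ha.ne']
        have h2 : a * ‖v - a⁻¹ • u‖ = ‖a • v - u‖ := by
          rw [show a * ‖v - a⁻¹ • u‖ = |a| * ‖v - a⁻¹ • u‖ by rw [abs_of_pos ha],
            ← Real.norm_eq_abs, ← norm_smul, smul_sub, smul_inv_smul₀ ha.ne']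
        show a * (p (a⁻¹ • u) + c * ‖v - a⁻¹ • u‖) = p u + c * ‖a • v - u‖
        rw [mul_add, ← h1]
        congr 1
        rw [← h2]
        ring
      · rintro ⟨_, ⟨u, rfl⟩, rfl⟩
        refine ⟨a • u, ?_⟩
        show p (a • u) + c * ‖a • v - a • u‖ = a * (p u + c * ‖v - u‖)
        have h1 : p (a • u) = a * p u := clarkeDeriv_smul hF x _ ha
        have h2 : ‖a • v - a • u‖ = a * ‖v - u‖ := by
          rw [← smul_sub, norm_smul, Real.norm_eq_abs, abs_of_pos ha]
        rw [h1, h2]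
        ring
    have him : (fun y => a * y) '' (Set.range fun u => p u + c * ‖v - u‖)
        = a • (Set.range fun u => p u + c * ‖v - u‖) := by
      ext y
      simp [Set.mem_smul_set, smul_eq_mul]
    rw [hq]
    simp only []
    rw [hset, him, Real.sInf_smul_of_nonneg ha.le]
    simp [smul_eq_mul]
  have hNadd : ∀ v w : E, q (v + w) ≤ q v + q w := by
    intro v w
    rw [← sub_le_iff_le_add]
    refine le_csInf ⟨_, ⟨v, rfl⟩⟩ ?_
    rintro b ⟨u, rfl⟩
    have h5 : q (v + w) - (p u + c * ‖v - u‖) ≤ q w := by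
      refine le_csInf ⟨_, ⟨w, rfl⟩⟩ ?_
      rintro b' ⟨u', rfl⟩
      have h1 : q (v + w) ≤ p (u + u') + c * ‖v + w - (u + u')‖ :=
        csInf_le (hbdd (v + w)) ⟨u + u', rfl⟩
      have h2 : p (u + u') ≤ p u + p u' := clarkeDeriv_add_le hF x u u'
      have h3 : ‖v + w - (u + u')‖ ≤ ‖v - u‖ + ‖w - u'‖ := by
        have he : v + w - (u + u') = (v - u) + (w - u') := by abel
        rw [he]
        exact norm_add_le _ _
      have h4 := mul_le_mul_of_nonneg_left h3 hc
      show q (v + w) - (p u + c * ‖v - u‖) ≤ p u' + c * ‖w - u'‖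
      linarith
    show q (v + w) - q w ≤ p u + c * ‖v - u‖
    linarith
  obtain ⟨g, -, hg⟩ := exists_extension_of_le_sublinear (⟨⊥, 0⟩ : E →ₗ.[ℝ] ℝ) q hNhom hNadd
    (by
      rintro ⟨y, hy⟩
      obtain rfl : y = (0:E) := (Submodule.mem_bot ℝ).1 hy
      simpa using hq0)
  have hgb : ∀ v, ‖g v‖ ≤ c * ‖v‖ := by
    intro v
    rw [Real.norm_eq_abs, abs_le]
    constructor
    · have h1 := (hg (-v)).trans (hq_le_norm (-v))
      rw [map_neg, norm_neg] at h1
      linarith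
    · exact (hg v).trans (hq_le_norm v)
  set w : E →L[ℝ] ℝ := LinearMap.mkContinuous g c hgb with hwdef
  have hw_mem : w ∈ clarkeSubdiff F x := by
    intro v
    have : w v = g v := rfl
    rw [this]
    exact (hg v).trans (hq_le_p v)
  have h5 : lambdaF F x ≤ ‖w‖ := by
    refine csInf_le ⟨0, ?_⟩ ⟨w, hw_mem, rfl⟩
    rintro b ⟨w', -, rfl⟩
    exact norm_nonneg w'
  exact h5.trans (LinearMap.mkContinuous_norm_le g hc hgb)

private lemma exists_descent {F : E → ℝ} (hF : LocallyLipschitz F) (x : E) {c : ℝ} (hc : 0 ≤ c)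
    (hl : c < lambdaF F x) :
    ∃ v : E, ‖v‖ = 1 ∧ ∃ δ > (0:ℝ), ∃ s ∈ 𝓝 x, ∀ z ∈ s, ∀ τ : ℝ, 0 < τ → τ < δ →
      F (z + τ • v) ≤ F z - c * τ := by
  have hex : ∃ v0 : E, clarkeDeriv F x v0 < -(c * ‖v0‖) := by
    by_contra hno
    push_neg at hno
    exact absurd (lambdaF_le_of_clarkeDeriv_ge hF x hc fun v => hno v) (not_le.2 hl)
  obtain ⟨v0, hv0⟩ := hex
  have hv0ne : v0 ≠ 0 := by
    rintro rfl
    rw [clarkeDeriv_zero, norm_zero, mul_zero, neg_zero] at hv0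
    exact lt_irrefl _ hv0
  have hn0 : (0:ℝ) < ‖v0‖ := norm_pos_iff.2 hv0ne
  set v := ‖v0‖⁻¹ • v0 with hvdef
  have hnv : ‖v‖ = 1 := by
    rw [hvdef, norm_smul, Real.norm_eq_abs, abs_of_pos (inv_pos.2 hn0), inv_mul_cancel₀ hn0.ne']
  have hderiv : clarkeDeriv F x v < -c := by
    rw [hvdef, clarkeDeriv_smul hF x _ (inv_pos.2 hn0)]
    calc ‖v0‖⁻¹ * clarkeDeriv F x v0 < ‖v0‖⁻¹ * -(c * ‖v0‖) :=
          (mul_lt_mul_iff_right₀ (inv_pos.2 hn0)).2 hv0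
      _ = -c := by field_simp
  have hev : ∀ᶠ p in (𝓝 x) ×ˢ (𝓝[>] (0:ℝ)), (F (p.1 + p.2 • v) - F p.1) / p.2 < -c :=
    eventually_lt_of_limsup_lt hderiv (quot_bddle hF x v)
  rw [Filter.eventually_prod_iff] at hev
  obtain ⟨pa, hpa, pb, hpb, hcomb⟩ := hev
  obtain ⟨δ', hδ', hsub⟩ := mem_nhdsGT_iff_exists_Ioo_subset.1 hpb
  refine ⟨v, hnv, δ', hδ', {z | pa z}, hpa, fun z hz τ hτ0 hτδ => ?_⟩
  have h6 := hcomb hz (hsub ⟨hτ0, hτδ⟩)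
  rw [div_lt_iff₀ hτ0] at h6
  linarith

private lemma weight_pos' {h : ℝ → ℝ} (hw : IsWeight h) {x : ℝ} (hx : 0 ≤ x) :
    0 < 1 + h x := by
  have := hw.2.2.1 x hx
  linarith

private lemma weight_cont0 {h : ℝ → ℝ} (hw : IsWeight h) :
    ContinuousOn (fun ρ : ℝ => 1/(1 + h ρ)) (Ici 0) := by
  refine ContinuousOn.div continuousOn_const (continuousOn_const.add hw.1) ?_
  exact fun ρ hρ => ne_of_gt (weight_pos' hw hρ)

private lemma weight_cont {h : ℝ → ℝ} (hw : IsWeight h) {R : ℝ} (hR : 0 ≤ R) :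
    ContinuousOn (fun r : ℝ => 1/(1 + h (R + r))) (Ici 0) := by
  have hmaps : MapsTo (fun r : ℝ => R + r) (Ici 0) (Ici 0) := fun r hr => by
    simp only [mem_Ici] at *; linarith
  exact (weight_cont0 hw).comp (continuous_const.add continuous_id).continuousOn hmaps

private lemma weight_integrable {h : ℝ → ℝ} (hw : IsWeight h) {R : ℝ} (hR : 0 ≤ R)
    {a b : ℝ} (ha : 0 ≤ a) (hab : a ≤ b) :
    IntervalIntegrable (fun r : ℝ => 1/(1 + h (R + r))) MeasureTheory.volume a b := by
  apply ContinuousOn.intervalIntegrable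
  apply (weight_cont hw hR).mono
  rw [uIcc_of_le hab]
  exact fun r hr => le_trans ha hr.1

private lemma Phi_nonneg {h : ℝ → ℝ} (hw : IsWeight h) {R : ℝ} (hR : 0 ≤ R)
    {a b : ℝ} (ha : 0 ≤ a) (hab : a ≤ b) :
    0 ≤ ∫ r in a..b, 1/(1 + h (R + r)) := by
  refine intervalIntegral.integral_nonneg hab fun x hx => ?_
  have hx0 : 0 ≤ x := le_trans ha hx.1
  have := weight_pos' hw (show (0:ℝ) ≤ R + x by linarith)
  positivity

private lemma Phi_mono {h : ℝ → ℝ} (hw : IsWeight h) {R : ℝ} (hR : 0 ≤ R)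
    {a b : ℝ} (ha : 0 ≤ a) (hab : a ≤ b) :
    (∫ r in (0:ℝ)..a, 1/(1 + h (R + r))) ≤ ∫ r in (0:ℝ)..b, 1/(1 + h (R + r)) := by
  have h1 := intervalIntegral.integral_add_adjacent_intervals
    (weight_integrable hw hR le_rfl ha) (weight_integrable hw hR ha hab)
  rw [← h1]
  have h2 := Phi_nonneg hw hR ha hab
  linarith

private lemma Phi_key {h : ℝ → ℝ} (hw : IsWeight h) {R : ℝ} (hR : 0 ≤ R)
    {L t : ℝ} (hL : 0 ≤ L) (ht : 0 ≤ t) :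
    (∫ r in (0:ℝ)..(L+t), 1/(1 + h (R + r))) - (∫ r in (0:ℝ)..L, 1/(1 + h (R + r)))
      ≤ t * (1/(1 + h (R + L))) := by
  have h1 := intervalIntegral.integral_add_adjacent_intervals
    (weight_integrable hw hR le_rfl hL) (weight_integrable hw hR hL (show L ≤ L + t by linarith))
  rw [← h1, add_sub_cancel_left]
  have h2 : (∫ r in L..(L+t), 1/(1 + h (R + r))) ≤ ∫ r in L..(L+t), 1/(1 + h (R + L)) := by
    refine intervalIntegral.integral_mono_on (by linarith)
      (weight_integrable hw hR hL (show L ≤ L + t by linarith)) intervalIntegrable_const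
      fun x hx => ?_
    have hx0 : 0 ≤ x := le_trans hL hx.1
    have hmono := hw.2.1 (show R + L ∈ Ici (0:ℝ) by simp [mem_Ici]; linarith)
      (show R + x ∈ Ici (0:ℝ) by simp [mem_Ici]; linarith) (by linarith [hx.1])
    exact one_div_le_one_div_of_le (weight_pos' hw (by linarith)) (by linarith)
  rw [intervalIntegral.integral_const] at h2
  have h3 : (L + t - L) • (1/(1 + h (R + L))) = t * (1/(1 + h (R + L))) := by
    rw [smul_eq_mul]; ring_nf
  rw [h3] at h2
  exact h2

private lemma Phi_unbounded {h : ℝ → ℝ} (hw : IsWeight h) {R : ℝ} (hR : 0 ≤ R) (C : ℝ) :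
    ∃ L, 0 ≤ L ∧ C < ∫ r in (0:ℝ)..L, 1/(1 + h (R + r)) := by
  by_contra hno
  push_neg at hno
  set f : ℝ → ENNReal := fun ρ => ENNReal.ofReal (1/(1 + h ρ)) with hfdef
  have hpiece : ∀ n : ℕ, (∫⁻ ρ in Ioc R (R+(n:ℝ)), f ρ) ≤ ENNReal.ofReal C := by
    intro n
    have hRn : R ≤ R + (n:ℝ) := le_add_of_nonneg_right (Nat.cast_nonneg n)
    have hsubIcc : Icc R (R+(n:ℝ)) ⊆ Ici (0:ℝ) := fun x hx => le_trans hR hx.1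
    have hint : MeasureTheory.IntegrableOn (fun ρ : ℝ => 1/(1 + h ρ))
        (Ioc R (R+(n:ℝ))) MeasureTheory.volume :=
      (((weight_cont0 hw).mono hsubIcc).integrableOn_Icc).mono_set Ioc_subset_Icc_self
    have hnn : 0 ≤ᵐ[MeasureTheory.volume.restrict (Ioc R (R+(n:ℝ)))]
        (fun ρ : ℝ => 1/(1 + h ρ)) := by
      filter_upwards [MeasureTheory.ae_restrict_mem measurableSet_Ioc] with x hx
      have := weight_pos' hw (le_trans hR hx.1.le)
      simp only [Pi.zero_apply]
      positivity
    have heq : ENNReal.ofReal (∫ ρ in Ioc R (R+(n:ℝ)), 1/(1 + h ρ))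
        = ∫⁻ ρ in Ioc R (R+(n:ℝ)), f ρ :=
      MeasureTheory.ofReal_integral_eq_lintegral_ofReal hint hnn
    rw [← heq]
    apply ENNReal.ofReal_le_ofReal
    have h3 : (∫ ρ in Ioc R (R+(n:ℝ)), 1/(1 + h ρ))
        = ∫ r in (0:ℝ)..(n:ℝ), 1/(1 + h (R + r)) := by
      rw [intervalIntegral.integral_comp_add_left (a := (0:ℝ)) (b := (n:ℝ))
        (fun ρ : ℝ => 1/(1 + h ρ)) R, add_zero,
        intervalIntegral.integral_of_le hRn]
    rw [h3]
    exact hno _ (Nat.cast_nonneg n)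
  -- monotone convergence over `Ioc R (R+n) ↑ Ioi R`
  have hmeasf : ∀ n : ℕ, AEMeasurable ((Ioc R (R+(n:ℝ))).indicator f) MeasureTheory.volume := by
    intro n
    rw [aemeasurable_indicator_iff measurableSet_Ioc]
    have hsub : Ioc R (R+(n:ℝ)) ⊆ Ici (0:ℝ) := fun x hx => le_trans hR hx.1.le
    exact ENNReal.measurable_ofReal.comp_aemeasurable
      (((weight_cont0 hw).mono hsub).aemeasurable measurableSet_Ioc)
  have hmono : ∀ x : ℝ, Monotone fun n : ℕ => (Ioc R (R+(n:ℝ))).indicator f x := by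
    intro x n m hnm
    refine Set.indicator_le_indicator_of_subset (f := f)
      (Ioc_subset_Ioc_right (add_le_add_right (Nat.cast_le.2 hnm) R)) (fun a => (zero_le : (0:ENNReal) ≤ f a)) x
  have hsup : ∀ x : ℝ, (⨆ n : ℕ, (Ioc R (R+(n:ℝ))).indicator f x) = (Ioi R).indicator f x := by
    intro x
    by_cases hx : x ∈ Ioi R
    · obtain ⟨n, hn⟩ := exists_nat_ge (x - R)
      refine le_antisymm (iSup_le fun m => ?_) ?_
      · by_cases hxm : x ∈ Ioc R (R+(m:ℝ))
        · rw [Set.indicator_of_mem hxm, Set.indicator_of_mem hx]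
        · rw [Set.indicator_of_notMem hxm]; exact zero_le
      · have he : (Ioi R).indicator f x = (Ioc R (R+(n:ℝ))).indicator f x := by
          rw [Set.indicator_of_mem hx f, Set.indicator_of_mem
            (show x ∈ Ioc R (R+(n:ℝ)) from ⟨hx, by linarith [hn]⟩) f]
        rw [he]
        exact le_iSup (fun n : ℕ => (Ioc R (R+(n:ℝ))).indicator f x) n
    · have hx' : ∀ n : ℕ, x ∉ Ioc R (R+(n:ℝ)) := fun n hc => hx hc.1
      simp [Set.indicator_of_notMem hx, Set.indicator_of_notMem (hx' _)]
  have hlim : (∫⁻ ρ in Ioi R, f ρ) ≤ ENNReal.ofReal C := by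
    have h4 : (∫⁻ x, (Ioi R).indicator f x) = ⨆ n : ℕ, ∫⁻ x, (Ioc R (R+(n:ℝ))).indicator f x := by
      rw [← MeasureTheory.lintegral_iSup' hmeasf (Filter.Eventually.of_forall hmono)]
      congr 1
      funext x
      exact (hsup x).symm
    rw [← MeasureTheory.lintegral_indicator measurableSet_Ioi, h4]
    refine iSup_le fun n => ?_
    rw [MeasureTheory.lintegral_indicator measurableSet_Ioc]
    exact hpiece n
  have hIocR : (∫⁻ ρ in Ioc (0:ℝ) R, f ρ) ≤ ENNReal.ofReal R := by
    calc (∫⁻ ρ in Ioc (0:ℝ) R, f ρ) ≤ ∫⁻ _ in Ioc (0:ℝ) R, 1 := by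
          refine MeasureTheory.setLIntegral_mono' measurableSet_Ioc fun x hx => ?_
          have hx0 : (0:ℝ) ≤ x := hx.1.le
          have hh := hw.2.2.1 x hx0
          calc f x ≤ ENNReal.ofReal 1 := ENNReal.ofReal_le_ofReal
                (by rw [div_le_one (by linarith)]; linarith)
            _ = 1 := ENNReal.ofReal_one
      _ = MeasureTheory.volume (Ioc (0:ℝ) R) := by
          rw [MeasureTheory.setLIntegral_one]
      _ = ENNReal.ofReal R := by rw [Real.volume_Ioc, sub_zero]
  have hsplit : (∫⁻ ρ in Ioi (0:ℝ), f ρ)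
      = (∫⁻ ρ in Ioc (0:ℝ) R, f ρ) + ∫⁻ ρ in Ioi R, f ρ := by
    rw [← MeasureTheory.lintegral_union measurableSet_Ioi
      (Set.Ioc_disjoint_Ioi le_rfl), Ioc_union_Ioi_eq_Ioi hR]
  have htop : (∫⁻ ρ in Ioi (0:ℝ), f ρ) = ⊤ := hw.2.2.2
  rw [hsplit] at htop
  have hfin : (∫⁻ ρ in Ioc (0:ℝ) R, f ρ) + (∫⁻ ρ in Ioi R, f ρ) < ⊤ :=
    lt_of_le_of_lt (add_le_add hIocR hlim)
      (by exact ENNReal.add_lt_top.2 ⟨ENNReal.ofReal_lt_top, ENNReal.ofReal_lt_top⟩)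
  rw [htop] at hfin
  exact absurd hfin (lt_irrefl _)

end CPSAux

/-- For a locally Lipschitz functional `F` bounded from below and any weight `h`, there is a
minimizing weighted Chang–Palais–Smale sequence. -/
theorem minimizing_CPS_sequence {X : Type*}
    [NormedAddCommGroup X] [NormedSpace ℝ X] [CompleteSpace X]
    (F : X → ℝ) (hF : LocallyLipschitz F) (hbdd : BddBelow (Set.range F))
    (h : ℝ → ℝ) (hw : IsWeight h) :
    ∃ u : ℕ → X,
      Tendsto (fun n => F (u n)) atTop (𝓝 (sInf (Set.range F))) ∧
      Tendsto (fun n => lambdaF F (u n) * (1 + h ‖u n‖)) atTop (𝓝 0) := by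
  classical
  set m := sInf (Set.range F) with hmdef
  have hne : (Set.range F).Nonempty := ⟨F 0, 0, rfl⟩
  have hmle : ∀ z : X, m ≤ F z := fun z => csInf_le hbdd ⟨z, rfl⟩
  have key : ∀ ε : ℝ, 0 < ε → ∃ x : X, F x ≤ m + ε ∧ lambdaF F x * (1 + h ‖x‖) ≤ ε := by
    intro ε hε
    by_contra hcon
    push_neg at hcon
    obtain ⟨a0, ⟨x₀, rfl⟩, hx₀⟩ := Real.lt_sInf_add_pos hne hε
    set R := ‖x₀‖ with hRdef
    have hR : (0:ℝ) ≤ R := norm_nonneg x₀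
    obtain ⟨g, Φ, hgpos, hgle, hΦ0, hΦnonneg, hΦmono, hΦkey, hΦunbdd⟩ :
        ∃ g Φ : ℝ → ℝ,
          (∀ L, 0 ≤ L → 0 < g L) ∧
          (∀ (z : X) (L : ℝ), 0 ≤ L → ‖z‖ ≤ R + L → g L ≤ 1/(1 + h ‖z‖)) ∧
          Φ 0 = 0 ∧ (∀ L, 0 ≤ L → 0 ≤ Φ L) ∧
          (∀ a b, 0 ≤ a → a ≤ b → Φ a ≤ Φ b) ∧
          (∀ L t, 0 ≤ L → 0 ≤ t → Φ (L + t) - Φ L ≤ t * g L) ∧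
          (∀ C, ∃ L, 0 ≤ L ∧ C < Φ L) := by
      refine ⟨fun L => 1/(1 + h (R + L)), fun L => ∫ r in (0:ℝ)..L, 1/(1 + h (R + r)),
        ?_, ?_, intervalIntegral.integral_same, fun L hL => Phi_nonneg hw hR le_rfl hL,
        fun a b ha hab => Phi_mono hw hR ha hab, fun L t hL ht => Phi_key hw hR hL ht,
        fun C => Phi_unbounded hw hR C⟩
      · intro L hL
        have := weight_pos' hw (show (0:ℝ) ≤ R + L by linarith)
        positivity
      · intro z L hL hzRL
        have h1 := weight_pos' hw (norm_nonneg z)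
        have h2 := hw.2.1 (mem_Ici.2 (norm_nonneg z))
          (mem_Ici.2 (show (0:ℝ) ≤ R + L by linarith)) hzRL
        exact one_div_le_one_div_of_le h1 (by linarith)
    set TT : X → ℝ → Set ℝ := fun y L => {t' : ℝ | 0 < t' ∧ t' ≤ 1 ∧ ∃ v : X, ‖v‖ = 1 ∧
      ∀ τ : ℝ, 0 < τ → τ ≤ t' → F (y + τ • v) ≤ F y - (ε * g L) * τ} with hTTdef
    have hstep : ∀ y : X, ∀ L : ℝ, 0 ≤ L → ‖y - x₀‖ ≤ L → F y ≤ m + ε →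
        ∃ t v, 0 < t ∧ t ≤ 1 ∧ ‖v‖ = 1 ∧
          (∀ τ : ℝ, 0 < τ → τ ≤ t → F (y + τ • v) ≤ F y - (ε * g L) * τ) ∧
          (∀ t' ∈ TT y L, t' ≤ 2 * t) := by
      intro y L hL hyL hFy
      have hy0 : (0:ℝ) ≤ ‖y‖ := norm_nonneg y
      have hyRL : ‖y‖ ≤ R + L := by
        have h8 := norm_add_le x₀ (y - x₀)
        have h9 : x₀ + (y - x₀) = y := by abel
        rw [h9] at h8
        linarith
      have hgy : 0 < 1 + h ‖y‖ := weight_pos' hw hy0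
      have hlam := hcon y hFy
      have hgley : g L ≤ 1/(1 + h ‖y‖) := hgle y L hL hyRL
      have hcl : ε * g L < lambdaF F y := by
        have h1 : ε * g L ≤ ε * (1/(1 + h ‖y‖)) := mul_le_mul_of_nonneg_left hgley hε.le
        have h2 : ε * (1/(1 + h ‖y‖)) < lambdaF F y := by
          rw [mul_one_div, div_lt_iff₀ hgy]
          linarith
        linarith
      obtain ⟨v, hv1, δ, hδ, s, hs, hprop⟩ := exists_descent hF y
        (c := ε * g L) (mul_nonneg hε.le (hgpos L hL).le) hcl
      have hys : y ∈ s := mem_of_mem_nhds hs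
      set t0 : ℝ := min (δ/2) 1 with ht0def
      have ht0pos : 0 < t0 := lt_min (by linarith) one_pos
      have hTmem : t0 ∈ TT y L := by
        refine ⟨ht0pos, min_le_right _ _, v, hv1, fun τ hτ0 hτt => ?_⟩
        refine hprop y hys τ hτ0 ?_
        have := min_le_left (δ/2) 1
        linarith
      have hbddT : BddAbove (TT y L) := ⟨1, fun t' ht' => ht'.2.1⟩
      have hTne : (TT y L).Nonempty := ⟨t0, hTmem⟩
      have hsup_pos : 0 < sSup (TT y L) := lt_of_lt_of_le ht0pos (le_csSup hbddT hTmem)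
      obtain ⟨t1, ht1T, ht1⟩ := exists_lt_of_lt_csSup hTne
        (show sSup (TT y L)/2 < sSup (TT y L) by linarith)
      obtain ⟨ht1pos, ht1le, v1, hv1', hdesc1⟩ := ht1T
      refine ⟨t1, v1, ht1pos, ht1le, hv1', hdesc1, fun t' ht' => ?_⟩
      have := le_csSup hbddT ht'
      linarith
    have hstep' : ∀ q : X × ℝ, ∃ q' : X × ℝ, 0 ≤ q.2 → ‖q.1 - x₀‖ ≤ q.2 → F q.1 ≤ m + ε →
        ∃ t v, q' = (q.1 + t • v, q.2 + t) ∧ 0 < t ∧ t ≤ 1 ∧ ‖v‖ = 1 ∧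
          (∀ τ : ℝ, 0 < τ → τ ≤ t → F (q.1 + τ • v) ≤ F q.1 - (ε * g q.2) * τ) ∧
          (∀ t' ∈ TT q.1 q.2, t' ≤ 2 * t) := by
      intro q
      by_cases hq : 0 ≤ q.2 ∧ ‖q.1 - x₀‖ ≤ q.2 ∧ F q.1 ≤ m + ε
      · obtain ⟨t, v, ht0, ht1, hv, hdesc, hmax⟩ := hstep q.1 q.2 hq.1 hq.2.1 hq.2.2
        exact ⟨(q.1 + t • v, q.2 + t), fun _ _ _ => ⟨t, v, rfl, ht0, ht1, hv, hdesc, hmax⟩⟩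
      · exact ⟨q, fun h1 h2 h3 => absurd ⟨h1, h2, h3⟩ hq⟩
    choose next hnext using hstep'
    set seq : ℕ → X × ℝ := fun n => next^[n] (x₀, 0) with hseqdef
    have hseq_succ : ∀ n, seq (n+1) = next (seq n) := fun n =>
      Function.iterate_succ_apply' next n _
    have hseq0 : seq 0 = (x₀, 0) := rfl
    have hinv : ∀ n, 0 ≤ (seq n).2 ∧ ‖(seq n).1 - x₀‖ ≤ (seq n).2 ∧
        F (seq n).1 + ε * Φ (seq n).2 ≤ F x₀ := by
      intro n
      induction n with
      | zero =>
        rw [hseq0]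
        refine ⟨le_rfl, by simp, by simp [hΦ0]⟩
      | succ n ih =>
        have hΦn : 0 ≤ Φ (seq n).2 := hΦnonneg _ ih.1
        have hFn : F (seq n).1 ≤ m + ε := by
          have h1 : 0 ≤ ε * Φ (seq n).2 := mul_nonneg hε.le hΦn
          linarith [ih.2.2, hx₀.le]
        obtain ⟨t, v, heq, ht0, ht1, hv, hdesc, -⟩ := hnext (seq n) ih.1 ih.2.1 hFn
        rw [hseq_succ n, heq]
        have hkey := hΦkey (seq n).2 t ih.1 ht0.le
        refine ⟨?_, ?_, ?_⟩
        · show 0 ≤ (seq n).2 + t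
          linarith [ih.1]
        · show ‖(seq n).1 + t • v - x₀‖ ≤ (seq n).2 + t
          calc ‖(seq n).1 + t • v - x₀‖ ≤ ‖(seq n).1 - x₀‖ + ‖t • v‖ := by
                rw [add_sub_right_comm]; exact norm_add_le _ _
            _ ≤ (seq n).2 + t := by
                rw [norm_smul, Real.norm_eq_abs, abs_of_pos ht0, hv, mul_one]
                linarith [ih.2.1]
        · show F ((seq n).1 + t • v) + ε * Φ ((seq n).2 + t) ≤ F x₀
          have h1 : F ((seq n).1 + t • v) ≤ F (seq n).1 - (ε * g (seq n).2) * t :=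
            hdesc t ht0 le_rfl
          have h2 : ε * (Φ ((seq n).2 + t) - Φ (seq n).2) ≤ ε * (t * g (seq n).2) :=
            mul_le_mul_of_nonneg_left hkey hε.le
          have h3 := ih.2.2
          nlinarith
    have hFle : ∀ n, F (seq n).1 ≤ m + ε := by
      intro n
      have h1 := (hinv n).2.2
      have h2 : 0 ≤ ε * Φ (seq n).2 := mul_nonneg hε.le (hΦnonneg _ (hinv n).1)
      linarith [hx₀.le]
    have hdata : ∀ n, ∃ t v, seq (n+1) = ((seq n).1 + t • v, (seq n).2 + t) ∧ 0 < t ∧ t ≤ 1 ∧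
        ‖v‖ = 1 ∧
        (∀ τ : ℝ, 0 < τ → τ ≤ t → F ((seq n).1 + τ • v) ≤ F (seq n).1 - (ε * g (seq n).2) * τ) ∧
        (∀ t' ∈ TT (seq n).1 (seq n).2, t' ≤ 2 * t) := by
      intro n
      rw [hseq_succ n]
      exact hnext (seq n) (hinv n).1 (hinv n).2.1 (hFle n)
    choose t v hseqd ht0 ht1 hv hdesc hmax using hdata
    set y : ℕ → X := fun n => (seq n).1 with hydef
    set L : ℕ → ℝ := fun n => (seq n).2 with hLdef
    have hLsucc : ∀ n, L (n+1) = L n + t n := by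
      intro n
      show (seq (n+1)).2 = (seq n).2 + t n
      rw [hseqd n]
    have hysucc : ∀ n, y (n+1) = y n + t n • v n := by
      intro n
      show (seq (n+1)).1 = (seq n).1 + t n • v n
      rw [hseqd n]
    obtain ⟨Lstar, hLstar0, hLstarC⟩ := hΦunbdd ((F x₀ - m)/ε)
    have hLbound : ∀ n, L n ≤ Lstar := by
      intro n
      by_contra hgt
      push_neg at hgt
      have h1 : Φ Lstar ≤ Φ (L n) := hΦmono _ _ hLstar0 hgt.le
      have h2 := (hinv n).2.2
      have h3 : m ≤ F (y n) := hmle _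
      rw [div_lt_iff₀ hε] at hLstarC
      have h4 := mul_le_mul_of_nonneg_right h1 hε.le
      have h5 : ε * Φ (L n) = Φ (L n) * ε := mul_comm _ _
      have h2' : F (y n) + ε * Φ (L n) ≤ F x₀ := h2
      linarith
    have hLmono' : Monotone L := monotone_nat_of_le_succ fun n => by
      rw [hLsucc]; linarith [ht0 n]
    have hLbdd : BddAbove (Set.range L) := ⟨Lstar, by rintro _ ⟨n, rfl⟩; exact hLbound n⟩
    have hLtend : Tendsto L atTop (𝓝 (⨆ n, L n)) := tendsto_atTop_ciSup hLmono' hLbdd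
    set Linf := ⨆ n, L n with hLinf
    have hLle : ∀ n, L n ≤ Linf := fun n => le_ciSup hLbdd n
    have httend : Tendsto t atTop (𝓝 0) := by
      have h1 : Tendsto (fun n => L (n+1) - L n) atTop (𝓝 (Linf - Linf)) :=
        ((hLtend.comp (tendsto_add_atTop_nat 1)).sub hLtend)
      rw [sub_self] at h1
      refine h1.congr fun n => ?_
      rw [hLsucc]; ring
    have hydist : ∀ n k, ‖y (n+k) - y n‖ ≤ L (n+k) - L n := by
      intro n k
      induction k with
      | zero => simp
      | succ k ih =>
        have hnk : n + (k+1) = (n+k) + 1 := rfl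
        rw [hnk, hysucc, hLsucc]
        calc ‖y (n+k) + t (n+k) • v (n+k) - y n‖
            ≤ ‖y (n+k) - y n‖ + ‖t (n+k) • v (n+k)‖ := by
              rw [add_sub_right_comm]; exact norm_add_le _ _
          _ ≤ (L (n+k) - L n) + t (n+k) := by
              rw [norm_smul, Real.norm_eq_abs, abs_of_pos (ht0 _), hv, mul_one]
              linarith
          _ = L (n+k) + t (n+k) - L n := by ring
    have hycauchy : CauchySeq y := by
      refine cauchySeq_of_le_tendsto_0 (fun N => Linf - L N) ?_ ?_
      · intro p q N hp hq
        show dist (y p) (y q) ≤ Linf - L N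
        rcases le_total p q with hpq | hpq
        · obtain ⟨k, rfl⟩ := Nat.exists_eq_add_of_le hpq
          rw [dist_eq_norm, norm_sub_rev]
          have h8 := hydist p k
          have h9 : L N ≤ L p := hLmono' hp
          linarith [hLle (p+k)]
        · obtain ⟨k, rfl⟩ := Nat.exists_eq_add_of_le hpq
          rw [dist_eq_norm]
          have h8 := hydist q k
          have h9 : L N ≤ L q := hLmono' hq
          linarith [hLle (q+k)]
      · have h1 := hLtend.const_sub (b := Linf)
        simpa using h1
    obtain ⟨yinf, hyinf⟩ := cauchySeq_tendsto_of_complete hycauchy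
    have hFyinf : F yinf ≤ m + ε := by
      have h1 : Tendsto (fun n => F (y n)) atTop (𝓝 (F yinf)) :=
        (hF.continuous.tendsto yinf).comp hyinf
      exact le_of_tendsto h1 (Filter.Eventually.of_forall fun n => hFle n)
    have hyinfnorm0 : (0:ℝ) ≤ ‖yinf‖ := norm_nonneg _
    have hpos_inf : 0 < 1 + h ‖yinf‖ := weight_pos' hw hyinfnorm0
    have hlaminf := hcon yinf hFyinf
    set c' : ℝ := (ε / (1 + h ‖yinf‖) + lambdaF F yinf) / 2 with hc'def
    have hdivlt : ε / (1 + h ‖yinf‖) < lambdaF F yinf := by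
      rw [div_lt_iff₀ hpos_inf]; linarith
    have hc'1 : ε / (1 + h ‖yinf‖) < c' := by rw [hc'def]; linarith
    have hc'2 : c' < lambdaF F yinf := by rw [hc'def]; linarith
    have hc'pos : 0 ≤ c' := by
      have : 0 < ε / (1 + h ‖yinf‖) := div_pos hε hpos_inf
      linarith
    obtain ⟨vv, hvv1, δ, hδ, s, hs, hprop⟩ := exists_descent hF yinf hc'pos hc'2
    have htendnorm : Tendsto (fun n => h ‖y n‖) atTop (𝓝 (h ‖yinf‖)) := by
      have h1 : Tendsto (fun n => ‖y n‖) atTop (𝓝 ‖yinf‖) :=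
        (continuous_norm.tendsto yinf).comp hyinf
      have h2 : Tendsto (fun n => ‖y n‖) atTop (𝓝[Ici 0] ‖yinf‖) := by
        rw [tendsto_nhdsWithin_iff]
        exact ⟨h1, Filter.Eventually.of_forall fun n => mem_Ici.2 (norm_nonneg _)⟩
      exact ((hw.1 ‖yinf‖ hyinfnorm0).tendsto).comp h2
    have hratio : Tendsto (fun n => ε / (1 + h ‖y n‖)) atTop (𝓝 (ε / (1 + h ‖yinf‖))) :=
      tendsto_const_nhds.div (tendsto_const_nhds.add htendnorm) (ne_of_gt hpos_inf)
    have hev1 : ∀ᶠ n in atTop, ε / (1 + h ‖y n‖) < c' := hratio.eventually_lt_const hc'1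
    have hev2 : ∀ᶠ n in atTop, y n ∈ s := hyinf.eventually_mem hs
    set tstar : ℝ := min (δ/2) 1 with htstardef
    have htstarpos : 0 < tstar := lt_min (by linarith) one_pos
    have hev3 : ∀ᶠ n in atTop, t n < tstar / 2 :=
      httend.eventually_lt_const (by linarith)
    obtain ⟨n, hn1, hn2, hn3⟩ := (hev1.and (hev2.and hev3)).exists
    have hyRL : ‖y n‖ ≤ R + L n := by
      have h8 := norm_add_le x₀ (y n - x₀)
      have h9 : x₀ + (y n - x₀) = y n := by abel
      rw [h9] at h8
      linarith [(hinv n).2.1]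
    have hgood : tstar ∈ TT (y n) (L n) := by
      refine ⟨htstarpos, min_le_right _ _, vv, hvv1, fun τ hτ0 hτt => ?_⟩
      have hτδ : τ < δ := by
        have := min_le_left (δ/2) 1
        linarith
      have h1 := hprop (y n) hn2 τ hτ0 hτδ
      have h3 : g (L n) ≤ 1/(1 + h ‖y n‖) := hgle (y n) (L n) (hinv n).1 hyRL
      have h4 : ε * g (L n) ≤ ε / (1 + h ‖y n‖) := by
        have := mul_le_mul_of_nonneg_left h3 hε.le
        rw [mul_one_div] at this
        exact this
      have h2 : ε * g (L n) ≤ c' := by linarith [hn1]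
      have h5 : (ε * g (L n)) * τ ≤ c' * τ := mul_le_mul_of_nonneg_right h2 hτ0.le
      linarith
    have h6 := hmax n tstar hgood
    linarith [hn3]
  choose u hu1 hu2 using fun n : ℕ => key (1/((n:ℝ)+1)) (by positivity)
  refine ⟨u, ?_, ?_⟩
  · have hlow : ∀ n : ℕ, m ≤ F (u n) := fun n => hmle _
    have htendu : Tendsto (fun n : ℕ => m + 1/((n:ℝ)+1)) atTop (𝓝 m) := by
      have h1 := tendsto_one_div_add_atTop_nhds_zero_nat (𝕜 := ℝ)
      have h2 := h1.const_add m
      simpa using h2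
    exact tendsto_of_tendsto_of_tendsto_of_le_of_le tendsto_const_nhds htendu hlow hu1
  · have hlow : ∀ n : ℕ, 0 ≤ lambdaF F (u n) * (1 + h ‖u n‖) := fun n =>
      mul_nonneg (lambdaF_nonneg F _) (weight_pos' hw (norm_nonneg _)).le
    exact tendsto_of_tendsto_of_tendsto_of_le_of_le tendsto_const_nhds
      tendsto_one_div_add_atTop_nhds_zero_nat hlow hu2
end
end

section
/- Fix 1 < p < ∞. For every x ∈ W^{1,p}₀[0,1], the supremum norm of x satisfies ‖x‖_∞ ≤ ‖x‖_{W^{1,p}₀}, where ‖x‖_{W^{1,p}₀} = (∫₀¹ |x'(τ)|^p dτ)^{1/p}. Moreover, if Φ : Δ × ℝ → ℝ satisfies conditions (i)–(iii) below, then the map g : W^{1,p}₀[0,1] → L^p[0,1] defined by g(x)(t) := ∫₀^t Φ(t,τ,x(τ)) dτ satisfies, for every r ≥ 0 and all u, v ∈ W^{1,p}₀[0,1] with ‖u‖_{W^{1,p}₀} ≤ r and ‖v‖_{W^{1,p}₀} ≤ r, the Lipschitz estimate ‖g(u) − g(v)‖_{L^p} ≤ θ(r)·‖u − v‖_{W^{1,p}₀}.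 -/
open MeasureTheory Set Filter

noncomputable section

/-- The triangle `Δ = {(t,τ) ∈ [0,1]×[0,1] : τ ≤ t}`. -/
def triangleSet : Set (ℝ × ℝ) :=
  {q : ℝ × ℝ | q.1 ∈ Icc (0 : ℝ) 1 ∧ q.2 ∈ Icc (0 : ℝ) 1 ∧ q.2 ≤ q.1}

/-- `x ∈ W^{1,p}₀[0,1]` with derivative `g`: `g ∈ L^p[0,1]` and `x(t) = ∫₀^t g(τ) dτ`
for all `t ∈ [0,1]` (in particular `x(0) = 0` and `x' = g` a.e.). -/
def InW1p0 (p : ℝ) (x g : ℝ → ℝ) : Prop :=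
  MemLp g (ENNReal.ofReal p) (volume.restrict (Icc (0 : ℝ) 1)) ∧
  ∀ t ∈ Icc (0 : ℝ) 1, x t = ∫ τ in (0 : ℝ)..t, g τ

/-- The `W^{1,p}₀`-norm of `x`, computed from its derivative `g`:
`‖x‖ = (∫₀¹ |g(τ)|^p dτ)^{1/p}`. -/
def w1pNorm (p : ℝ) (g : ℝ → ℝ) : ℝ :=
  (∫ τ in Icc (0 : ℝ) 1, |g τ| ^ p) ^ (1 / p)

/-- Condition (i): `Φ(·,·,u)` is measurable on `Δ` for every `u`. -/
def PhiMeasurable (Φ : ℝ → ℝ → ℝ → ℝ) : Prop :=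
  ∀ u : ℝ, Measurable fun q : triangleSet => Φ q.val.1 q.val.2 u

/-- Condition (ii): a growth bound `|Φ(t,τ,u)| ≤ a(t,τ)|u| + b(t,τ)` with `a, b ∈ L^p(Δ)`. -/
def PhiGrowth (p : ℝ) (Φ : ℝ → ℝ → ℝ → ℝ) : Prop :=
  ∃ a b : ℝ × ℝ → ℝ,
    MemLp a (ENNReal.ofReal p) (volume.restrict triangleSet) ∧
    MemLp b (ENNReal.ofReal p) (volume.restrict triangleSet) ∧
    ∀ᵐ q ∂(volume.restrict triangleSet),
      ∀ u : ℝ, |Φ q.1 q.2 u| ≤ a q * |u| + b q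

/-- Condition (iii): a Lipschitz estimate `|Φ(t,τ,u) − Φ(t,τ,v)| ≤ θ(r)|u−v|` for
`|u|, |v| ≤ r`, with `θ : [0,∞) → (0,1)` continuous and `∫₀^∞ (1−θ(r)) dr = ∞`. -/
def PhiLipschitz (Φ : ℝ → ℝ → ℝ → ℝ) (θ : ℝ → ℝ) : Prop :=
  ContinuousOn θ (Ici 0) ∧ (∀ r ∈ Ici (0 : ℝ), θ r ∈ Ioo (0 : ℝ) 1) ∧
  (∫⁻ r in Ioi (0 : ℝ), ENNReal.ofReal (1 - θ r) = ⊤) ∧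
  ∀ r ∈ Ici (0 : ℝ), ∀ᵐ q ∂(volume.restrict triangleSet),
    ∀ u v : ℝ, |u| ≤ r → |v| ≤ r → |Φ q.1 q.2 u - Φ q.1 q.2 v| ≤ θ r * |u - v|

/-- `x` is a solution of `x'(t) + ∫₀^t Φ(t,τ,x(τ)) dτ = y(t)` a.e. on `[0,1]`, with
`x ∈ W^{1,p}₀[0,1]` (so `x(0) = 0`). -/
def IsSolution (p : ℝ) (Φ : ℝ → ℝ → ℝ → ℝ) (y x : ℝ → ℝ) : Prop :=
  ∃ g : ℝ → ℝ, InW1p0 p x g ∧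
    ∀ᵐ t ∂(volume.restrict (Icc (0 : ℝ) 1)),
      g t + ∫ τ in (0 : ℝ)..t, Φ t τ (x τ) = y t

lemma measurableSet_triangleSet : MeasurableSet triangleSet := by
  have : triangleSet = (Icc (0:ℝ) 1 ×ˢ Icc (0:ℝ) 1) ∩ {q : ℝ × ℝ | q.2 ≤ q.1} := by
    ext q
    simp only [triangleSet, mem_setOf_eq, mem_inter_iff, mem_prod, mem_Icc]
    tauto
  rw [this]
  exact (measurableSet_Icc.prod measurableSet_Icc).inter
    (measurableSet_le measurable_snd measurable_fst)

lemma isProbIcc : IsProbabilityMeasure (volume.restrict (Icc (0:ℝ) 1)) :=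
  ⟨by simp [Measure.restrict_apply_univ, Real.volume_Icc]⟩

/-- Part (a): the sup-norm bound. -/
lemma lemA {p : ℝ} (hp : 1 < p) {x g : ℝ → ℝ} (h : InW1p0 p x g) :
    ∀ t ∈ Icc (0:ℝ) 1, |x t| ≤ w1pNorm p g := by
  haveI := isProbIcc
  intro t ht
  obtain ⟨hmem, hx⟩ := h
  have hgi : IntegrableOn g (Icc (0:ℝ) 1) :=
    hmem.integrable (ENNReal.one_le_ofReal.mpr hp.le)
  have h1 : |x t| ≤ ∫ τ in Ioc (0:ℝ) t, |g τ| := by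
    rw [hx t ht, intervalIntegral.integral_of_le ht.1]
    calc |∫ τ in Ioc (0:ℝ) t, g τ| = ‖∫ τ in Ioc (0:ℝ) t, g τ‖ := (Real.norm_eq_abs _).symm
      _ ≤ ∫ τ in Ioc (0:ℝ) t, ‖g τ‖ := norm_integral_le_integral_norm g
      _ = ∫ τ in Ioc (0:ℝ) t, |g τ| := by simp [Real.norm_eq_abs]
  have hsub : Ioc (0:ℝ) t ⊆ Icc (0:ℝ) 1 := fun τ hτ => ⟨hτ.1.le, hτ.2.trans ht.2⟩
  have h2 : ∫ τ in Ioc (0:ℝ) t, |g τ| ≤ ∫ τ in Icc (0:ℝ) 1, |g τ| :=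
    setIntegral_mono_set hgi.abs (Eventually.of_forall fun τ => abs_nonneg _)
      (HasSubset.Subset.eventuallyLE hsub)
  have h3 : ∫ τ in Icc (0:ℝ) 1, |g τ| ≤ (∫ τ in Icc (0:ℝ) 1, |g τ| ^ p) ^ (1/p) := by
    have hpq := Real.HolderConjugate.conjExponent hp
    have habs : MemLp (fun τ => |g τ|) (ENNReal.ofReal p) (volume.restrict (Icc (0:ℝ) 1)) := by
      simpa [Real.norm_eq_abs] using hmem.norm
    have hone : MemLp (fun _ : ℝ => (1:ℝ)) (ENNReal.ofReal (Real.conjExponent p))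
        (volume.restrict (Icc (0:ℝ) 1)) := memLp_const 1
    have := integral_mul_le_Lp_mul_Lq_of_nonneg hpq
      (Eventually.of_forall fun τ => abs_nonneg (g τ))
      (Eventually.of_forall fun _ => zero_le_one) habs hone
    simpa [Real.one_rpow, measure_univ] using this
  calc |x t| ≤ ∫ τ in Ioc (0:ℝ) t, |g τ| := h1
    _ ≤ ∫ τ in Icc (0:ℝ) 1, |g τ| := h2
    _ ≤ (∫ τ in Icc (0:ℝ) 1, |g τ| ^ p) ^ (1/p) := h3

/-- Slicing an a.e. statement on the triangle. -/
lemma ae_slice {P : ℝ × ℝ → Prop} (h : ∀ᵐ q ∂(volume.restrict triangleSet), P q) :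
    ∀ᵐ t ∂(volume.restrict (Icc (0:ℝ) 1)),
      ∀ᵐ τ ∂(volume.restrict (Ioc (0:ℝ) t)), P (t, τ) := by
  have h1 : ∀ᵐ q : ℝ × ℝ ∂volume, q ∈ triangleSet → P q :=
    (ae_restrict_iff' measurableSet_triangleSet).mp h
  rw [Measure.volume_eq_prod] at h1
  have h2 := Measure.ae_ae_of_ae_prod h1
  filter_upwards [ae_restrict_of_ae h2, self_mem_ae_restrict measurableSet_Icc] with t ht htI
  filter_upwards [ae_restrict_of_ae ht, self_mem_ae_restrict measurableSet_Ioc] with τ hτ hτI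
  exact hτ ⟨htI, ⟨hτI.1.le, hτI.2.trans htI.2⟩, hτI.2⟩

/-- Measurability of `τ ↦ Φ t τ (w τ)` for a.e. `t`, via the Lipschitz condition. -/
lemma phi_comp_aesm {Φ : ℝ → ℝ → ℝ → ℝ} (hΦ : PhiMeasurable Φ) {K r : ℝ} (hK : 0 ≤ K)
    (hr : 0 ≤ r)
    (hLip : ∀ᵐ q ∂(volume.restrict triangleSet), ∀ a b : ℝ, |a| ≤ r → |b| ≤ r →
      |Φ q.1 q.2 a - Φ q.1 q.2 b| ≤ K * |a - b|)
    {w : ℝ → ℝ} (hw : Measurable w) (hwr : ∀ τ, |w τ| ≤ r) :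
    ∀ᵐ t ∂(volume.restrict (Icc (0:ℝ) 1)),
      AEStronglyMeasurable (fun τ => Φ t τ (w τ)) (volume.restrict (Ioc (0:ℝ) t)) := by
  classical
  set E : ℝ → (ℝ × ℝ) → ℝ := fun c => Function.extend (Subtype.val : triangleSet → ℝ × ℝ)
    (fun q : triangleSet => Φ q.val.1 q.val.2 c) (fun _ => 0) with hE
  have hEmeas : ∀ c, Measurable (E c) := fun c =>
    (MeasurableEmbedding.subtype_coe measurableSet_triangleSet).measurable_extend (hΦ c)
      measurable_const
  have hEeq : ∀ c : ℝ, ∀ q ∈ triangleSet, E c q = Φ q.1 q.2 c := by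
    intro c q hq
    have h0 : q = ((⟨q, hq⟩ : triangleSet) : ℝ × ℝ) := rfl
    rw [hE]
    simp only []
    rw [h0, Subtype.val_injective.extend_apply]
  set proj : ℚ → ℝ := fun c => max (-r) (min r (c:ℝ)) with hprojdef
  have hproj_mem : ∀ c : ℚ, |proj c| ≤ r := by
    intro c
    rw [abs_le]
    constructor
    · exact le_max_left _ _
    · exact max_le (by linarith) (min_le_left _ _)
  have hproj_lip : ∀ (c : ℚ) (x : ℝ), |x| ≤ r → |x - proj c| ≤ |x - (c : ℝ)| := by
    intro c x hx
    rw [abs_le] at hx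
    rcases le_total ((c : ℝ)) (-r) with h1 | h1
    · have hpc : proj c = -r := by
        have hm : min r (c:ℝ) = (c:ℝ) := min_eq_right (by linarith)
        rw [hprojdef]; simp only [hm]; exact max_eq_left h1
      rw [hpc, abs_of_nonneg (by linarith), abs_of_nonneg (by linarith)]; linarith
    · rcases le_total r ((c : ℝ)) with h2 | h2
      · have hpc : proj c = r := by
          rw [hprojdef]; simp only [min_eq_left h2]; exact max_eq_right (by linarith)
        rw [hpc, abs_of_nonpos (by linarith), abs_of_nonpos (by linarith)]; linarith
      · have hpc : proj c = (c : ℝ) := by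
          rw [hprojdef]; simp only [min_eq_right h2]; exact max_eq_right h1
        rw [hpc]
  set H : ℝ × ℝ → ℝ := fun q => ⨅ c : ℚ, (E (proj c) q + K * |w q.2 - proj c|) with hHdef
  have hHmeas : Measurable H :=
    Measurable.iInf fun c => (hEmeas _).add
      (measurable_const.mul ((hw.comp measurable_snd).sub measurable_const).abs)
  have key : ∀ᵐ q ∂(volume.restrict triangleSet), Φ q.1 q.2 (w q.2) = H q := by
    filter_upwards [hLip, self_mem_ae_restrict measurableSet_triangleSet] with q hq hqT
    have hwq : |w q.2| ≤ r := hwr _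
    have hlb : ∀ c : ℚ, Φ q.1 q.2 (w q.2) ≤ E (proj c) q + K * |w q.2 - proj c| := by
      intro c
      rw [hEeq _ _ hqT]
      have h2 := (abs_le.mp (hq (w q.2) (proj c) hwq (hproj_mem c))).2
      linarith
    have hbdd : BddBelow (Set.range fun c : ℚ => E (proj c) q + K * |w q.2 - proj c|) :=
      ⟨Φ q.1 q.2 (w q.2), by rintro y ⟨c, rfl⟩; exact hlb c⟩
    have hge : Φ q.1 q.2 (w q.2) ≤ H q := le_ciInf hlb
    have hle : H q ≤ Φ q.1 q.2 (w q.2) := by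
      refine le_of_forall_pos_le_add fun ε hε => ?_
      have h2K : (0:ℝ) < 2*K+1 := by linarith
      obtain ⟨c, hc⟩ := exists_rat_near (w q.2) (show (0:ℝ) < ε / (2*K+1) by positivity)
      have h1 : |w q.2 - proj c| ≤ |w q.2 - (c:ℝ)| := hproj_lip c _ hwq
      have h3 : H q ≤ E (proj c) q + K * |w q.2 - proj c| := ciInf_le hbdd c
      rw [hEeq _ _ hqT] at h3
      have h4 := (abs_le.mp (hq (w q.2) (proj c) hwq (hproj_mem c))).1
      have h6 : K * |w q.2 - proj c| ≤ K * (ε/(2*K+1)) :=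
        mul_le_mul_of_nonneg_left (h1.trans hc.le) hK
      have h7 : 2*(K*(ε/(2*K+1))) ≤ ε := by
        rw [show 2*(K*(ε/(2*K+1))) = (2*K)*ε/(2*K+1) by ring, div_le_iff₀ h2K]
        nlinarith
      linarith
    exact le_antisymm hge hle
  have key2 := ae_slice key
  filter_upwards [key2, self_mem_ae_restrict measurableSet_Icc] with t ht htI
  have hmeasH : Measurable fun τ => H (t, τ) := hHmeas.comp measurable_prodMk_left
  refine (hmeasH.aestronglyMeasurable).congr ?_
  filter_upwards [ht] with τ hτ
  exact hτ.symm
/-- A measurable global representative of `x`, bounded by `r`. -/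
lemma exists_meas_rep {p : ℝ} (hp : 1 < p) {x g : ℝ → ℝ} (h : InW1p0 p x g) {r : ℝ}
    (hxr : w1pNorm p g ≤ r) :
    ∃ w : ℝ → ℝ, Measurable w ∧ (∀ τ, |w τ| ≤ r) ∧ ∀ τ ∈ Icc (0:ℝ) 1, w τ = x τ := by
  haveI := isProbIcc
  have hgi : IntegrableOn g (Icc (0:ℝ) 1) := h.1.integrable (ENNReal.one_le_ofReal.mpr hp.le)
  set g₁ : ℝ → ℝ := (Icc (0:ℝ) 1).indicator g with hg₁
  have hg₁i : Integrable g₁ := (integrable_indicator_iff measurableSet_Icc).mpr hgi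
  have hprim : Continuous fun s : ℝ => ∫ y in (0:ℝ)..s, g₁ y := hg₁i.continuous_primitive 0
  have heq : ∀ s ∈ Icc (0:ℝ) 1, (∫ y in (0:ℝ)..s, g₁ y) = x s := by
    intro s hs
    rw [h.2 s hs]
    apply intervalIntegral.integral_congr
    intro y hy
    rw [uIcc_of_le hs.1] at hy
    show (Icc (0:ℝ) 1).indicator g y = g y
    have hy1 : y ∈ Icc (0:ℝ) 1 := ⟨hy.1, hy.2.trans hs.2⟩
    exact indicator_of_mem hy1 g
  set w : ℝ → ℝ := fun τ => ∫ y in (0:ℝ)..(max 0 (min τ 1)), g₁ y with hwdef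
  have hwm : Measurable w := by
    have hc : Continuous w := by
      rw [hwdef]
      exact hprim.comp (continuous_const.max (continuous_id.min continuous_const))
    exact hc.measurable
  refine ⟨w, hwm, ?_, ?_⟩
  · intro τ
    have hmem : max 0 (min τ 1) ∈ Icc (0:ℝ) 1 :=
      ⟨le_max_left _ _, max_le zero_le_one (min_le_right _ _)⟩
    have hwx : w τ = x (max 0 (min τ 1)) := heq _ hmem
    rw [hwx]
    exact (lemA hp h _ hmem).trans hxr
  · intro τ hτ
    have hwx : w τ = ∫ y in (0:ℝ)..(max 0 (min τ 1)), g₁ y := rfl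
    rw [hwx, min_eq_left hτ.2, max_eq_right hτ.1]
    exact heq τ hτ

/-- For `1 < p < ∞`: (a) every `x ∈ W^{1,p}₀[0,1]` satisfies `‖x‖_∞ ≤ ‖x‖_{W^{1,p}₀}`;
(b) if `Φ` satisfies conditions (i)-(iii), then the map `g(x)(t) := ∫₀^t Φ(t,τ,x(τ)) dτ`
satisfies `‖g(u) - g(v)‖_{L^p} ≤ θ(r)·‖u - v‖_{W^{1,p}₀}` whenever `‖u‖, ‖v‖ ≤ r`. -/
theorem sup_norm_bound_and_lipschitz_estimate
    (p : ℝ) (hp : 1 < p) :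
    (∀ x g : ℝ → ℝ, InW1p0 p x g → ∀ t ∈ Icc (0 : ℝ) 1, |x t| ≤ w1pNorm p g) ∧
    ∀ Φ : ℝ → ℝ → ℝ → ℝ, ∀ θ : ℝ → ℝ,
      PhiMeasurable Φ → PhiGrowth p Φ → PhiLipschitz Φ θ →
      ∀ r ∈ Ici (0 : ℝ), ∀ u gu v gv : ℝ → ℝ,
        InW1p0 p u gu → InW1p0 p v gv → w1pNorm p gu ≤ r → w1pNorm p gv ≤ r →
        (∫ t in Icc (0 : ℝ) 1,
            |(∫ τ in (0 : ℝ)..t, Φ t τ (u τ)) - ∫ τ in (0 : ℝ)..t, Φ t τ (v τ)| ^ p) ^ (1 / p)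
          ≤ θ r * (∫ τ in Icc (0 : ℝ) 1, |gu τ - gv τ| ^ p) ^ (1 / p) := by
  constructor
  · intro x g h t ht
    exact lemA hp h t ht
  · intro Φ θ hΦ _hgrowth hLipAll r hr u gu v gv hu hv hru hrv
    haveI := isProbIcc
    have hr0 : (0:ℝ) ≤ r := mem_Ici.mp hr
    obtain ⟨_, hθmem, _, hLip'⟩ := hLipAll
    have hLip := hLip' r hr
    have hp0 : (0:ℝ) < p := by linarith
    set K := θ r with hKdef
    have hK0 : 0 < K := (hθmem r hr).1
    set C : ℝ := (∫ τ in Icc (0:ℝ) 1, |gu τ - gv τ| ^ p) ^ (1 / p) with hCdef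
    have hC0 : 0 ≤ C :=
      Real.rpow_nonneg (integral_nonneg fun τ => Real.rpow_nonneg (abs_nonneg _) _) _
    have hKC : 0 ≤ K * C := mul_nonneg hK0.le hC0
    have hgu_int : IntegrableOn gu (Icc (0:ℝ) 1) :=
      hu.1.integrable (ENNReal.one_le_ofReal.mpr hp.le)
    have hgv_int : IntegrableOn gv (Icc (0:ℝ) 1) :=
      hv.1.integrable (ENNReal.one_le_ofReal.mpr hp.le)
    have huv : InW1p0 p (fun s => u s - v s) (fun s => gu s - gv s) := by
      refine ⟨hu.1.sub hv.1, fun s hs => ?_⟩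
      have h1 : IntervalIntegrable gu volume 0 s :=
        (intervalIntegrable_iff_integrableOn_Ioc_of_le hs.1).mpr
          (hgu_int.mono_set fun τ hτ => ⟨hτ.1.le, hτ.2.trans hs.2⟩)
      have h2 : IntervalIntegrable gv volume 0 s :=
        (intervalIntegrable_iff_integrableOn_Ioc_of_le hs.1).mpr
          (hgv_int.mono_set fun τ hτ => ⟨hτ.1.le, hτ.2.trans hs.2⟩)
      show u s - v s = ∫ τ in (0:ℝ)..s, (gu τ - gv τ)
      rw [hu.2 s hs, hv.2 s hs]
      exact (intervalIntegral.integral_sub h1 h2).symm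
    have hCb : ∀ τ ∈ Icc (0:ℝ) 1, |u τ - v τ| ≤ C := fun τ hτ => lemA hp huv τ hτ
    have hub : ∀ τ ∈ Icc (0:ℝ) 1, |u τ| ≤ r := fun τ hτ => (lemA hp hu τ hτ).trans hru
    have hvb : ∀ τ ∈ Icc (0:ℝ) 1, |v τ| ≤ r := fun τ hτ => (lemA hp hv τ hτ).trans hrv
    obtain ⟨wu, hwu_m, hwu_r, hwu_eq⟩ := exists_meas_rep hp hu hru
    obtain ⟨wv, hwv_m, hwv_r, hwv_eq⟩ := exists_meas_rep hp hv hrv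
    have hsmu := phi_comp_aesm hΦ hK0.le hr0 hLip hwu_m hwu_r
    have hsmv := phi_comp_aesm hΦ hK0.le hr0 hLip hwv_m hwv_r
    have hlipslice := ae_slice hLip
    have ptbound : ∀ᵐ t ∂(volume.restrict (Icc (0:ℝ) 1)),
        |(∫ τ in (0:ℝ)..t, Φ t τ (u τ)) - ∫ τ in (0:ℝ)..t, Φ t τ (v τ)| ≤ K * C := by
      filter_upwards [hsmu, hsmv, hlipslice, self_mem_ae_restrict measurableSet_Icc]
        with t hsu hsv hlt htI
      haveI : IsFiniteMeasure (volume.restrict (Ioc (0:ℝ) t)) :=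
        ⟨by rw [Measure.restrict_apply_univ]; exact measure_Ioc_lt_top⟩
      have hsub : Ioc (0:ℝ) t ⊆ Icc (0:ℝ) 1 := fun τ hτ => ⟨hτ.1.le, hτ.2.trans htI.2⟩
      have hsu' : AEStronglyMeasurable (fun τ => Φ t τ (u τ))
          (volume.restrict (Ioc (0:ℝ) t)) := by
        refine hsu.congr ?_
        filter_upwards [self_mem_ae_restrict measurableSet_Ioc] with τ hτ
        rw [hwu_eq τ (hsub hτ)]
      have hsv' : AEStronglyMeasurable (fun τ => Φ t τ (v τ))
          (volume.restrict (Ioc (0:ℝ) t)) := by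
        refine hsv.congr ?_
        filter_upwards [self_mem_ae_restrict measurableSet_Ioc] with τ hτ
        rw [hwv_eq τ (hsub hτ)]
      have hlt' : ∀ᵐ τ ∂(volume.restrict (Ioc (0:ℝ) t)),
          ‖Φ t τ (u τ) - Φ t τ (v τ)‖ ≤ K * C := by
        filter_upwards [hlt, self_mem_ae_restrict measurableSet_Ioc] with τ hτ hτI
        rw [Real.norm_eq_abs]
        exact (hτ (u τ) (v τ) (hub τ (hsub hτI)) (hvb τ (hsub hτI))).trans
          (mul_le_mul_of_nonneg_left (hCb τ (hsub hτI)) hK0.le)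
      have hd_int : IntegrableOn (fun τ => Φ t τ (u τ) - Φ t τ (v τ)) (Ioc (0:ℝ) t) :=
        Integrable.mono' (integrable_const (K*C)) (hsu'.sub hsv') hlt'
      have hd_ii : IntervalIntegrable (fun τ => Φ t τ (u τ) - Φ t τ (v τ)) volume 0 t :=
        (intervalIntegrable_iff_integrableOn_Ioc_of_le htI.1).mpr hd_int
      by_cases h1 : IntervalIntegrable (fun τ => Φ t τ (u τ)) volume 0 t
      · have h2 : IntervalIntegrable (fun τ => Φ t τ (v τ)) volume 0 t := by
          have h3 := h1.sub hd_ii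
          have h4 : (fun τ => Φ t τ (u τ) - (Φ t τ (u τ) - Φ t τ (v τ)))
              = fun τ => Φ t τ (v τ) := by funext τ; ring
          rwa [h4] at h3
        rw [← intervalIntegral.integral_sub h1 h2, intervalIntegral.integral_of_le htI.1]
        have hb := norm_setIntegral_le_of_norm_le_const_ae' measure_Ioc_lt_top
          ((ae_restrict_iff' measurableSet_Ioc).mp hlt')
        rw [Real.norm_eq_abs] at hb
        refine hb.trans ?_
        rw [Real.volume_real_Ioc, max_eq_left (by linarith [htI.1] : (0:ℝ) ≤ t - 0)]
        have h5 := mul_le_of_le_one_right hKC (by linarith [htI.2] : t - 0 ≤ 1)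
        linarith
      · have h2 : ¬ IntervalIntegrable (fun τ => Φ t τ (v τ)) volume 0 t := by
          intro h2
          apply h1
          have h3 := h2.add hd_ii
          have h4 : (fun τ => Φ t τ (v τ) + (Φ t τ (u τ) - Φ t τ (v τ)))
              = fun τ => Φ t τ (u τ) := by funext τ; ring
          rwa [h4] at h3
        rw [intervalIntegral.integral_undef h1, intervalIntegral.integral_undef h2]
        simpa using hKC
    have final : (∫ t in Icc (0:ℝ) 1,
        |(∫ τ in (0:ℝ)..t, Φ t τ (u τ)) - ∫ τ in (0:ℝ)..t, Φ t τ (v τ)| ^ p)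
        ≤ (K*C)^p := by
      by_cases hInt : Integrable (fun t =>
          |(∫ τ in (0:ℝ)..t, Φ t τ (u τ)) - ∫ τ in (0:ℝ)..t, Φ t τ (v τ)| ^ p)
          (volume.restrict (Icc (0:ℝ) 1))
      · have hmono : (∫ t in Icc (0:ℝ) 1,
            |(∫ τ in (0:ℝ)..t, Φ t τ (u τ)) - ∫ τ in (0:ℝ)..t, Φ t τ (v τ)| ^ p)
            ≤ ∫ _t in Icc (0:ℝ) 1, (K*C)^p := by
          refine integral_mono_ae hInt (integrable_const _) ?_
          filter_upwards [ptbound] with t ht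
          exact Real.rpow_le_rpow (abs_nonneg _) ht hp0.le
        refine hmono.trans ?_
        simp
      · rw [integral_undef hInt]
        positivity
    have hfin2 := Real.rpow_le_rpow
      (integral_nonneg fun t => Real.rpow_nonneg (abs_nonneg _) _) final
      (by positivity : (0:ℝ) ≤ 1/p)
    refine hfin2.trans_eq ?_
    rw [← Real.rpow_mul hKC, mul_one_div_cancel (ne_of_gt hp0), Real.rpow_one]
end
end
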